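/- arXiv:2001.10315 — 12 statements merged into one kernel-verified Lean document; each statement's English description precedes it below -/
import Mathlib

section
/- For any integer a and any positive integer m, lcm(a-1, a^2-1, ..., a^m-1) = ∏_{k=1}^m Φ_k(a), where Φ_k denotes the k-th cyclotomic polynomial evaluated at a. -/
open Finset Polynomial

-- divisibility: g ∣ k → a^g - 1 ∣ a^k - 1
lemma pow_sub_one_dvd_pow_sub_one (a : ℤ) {g k : ℕ} (h : g ∣ k) :
    a ^ g - 1 ∣ a ^ k - 1 := by
  obtain ⟨t, rfl⟩ := h
  have := sub_dvd_pow_sub_pow (a ^ g) 1 t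
  simpa [pow_mul] using this

-- ℕ distributivity: gcd (lcm x y) b ∣ lcm (gcd x b) (gcd y b)
lemma nat_gcd_lcm_dvd (x y b : ℕ) :
    Nat.gcd (Nat.lcm x y) b ∣ Nat.lcm (Nat.gcd x b) (Nat.gcd y b) := by
  rcases eq_or_ne x 0 with rfl | hx
  · rw [Nat.lcm_zero_left, Nat.gcd_zero_left]
    exact Nat.dvd_lcm_left _ _
  rcases eq_or_ne y 0 with rfl | hy
  · rw [Nat.lcm_zero_right, Nat.gcd_zero_left]
    exact Nat.dvd_lcm_right _ _
  rcases eq_or_ne b 0 with rfl | hb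
  · simp [Nat.gcd_zero_right]
  have hlcm : Nat.lcm x y ≠ 0 := Nat.lcm_ne_zero hx hy
  have hL : Nat.gcd (Nat.lcm x y) b ≠ 0 := fun h => hb (Nat.eq_zero_of_gcd_eq_zero_right h)
  have hgx : Nat.gcd x b ≠ 0 := fun h => hx (by simpa using Nat.eq_zero_of_gcd_eq_zero_left h)
  have hgy : Nat.gcd y b ≠ 0 := fun h => hy (by simpa using Nat.eq_zero_of_gcd_eq_zero_left h)
  have hR : Nat.lcm (Nat.gcd x b) (Nat.gcd y b) ≠ 0 := Nat.lcm_ne_zero hgx hgy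
  rw [← Nat.factorization_le_iff_dvd hL hR]
  rw [Nat.factorization_gcd hlcm hb, Nat.factorization_lcm hx hy,
    Nat.factorization_lcm hgx hgy, Nat.factorization_gcd hx hb, Nat.factorization_gcd hy hb]
  intro p
  simp only [Finsupp.inf_apply, Finsupp.sup_apply]
  omega

-- ℤ binary distributivity (one direction)
lemma int_gcd_lcm_dvd (x y b : ℤ) :
    gcd (lcm x y) b ∣ lcm (gcd x b) (gcd y b) := by
  rw [← Int.coe_gcd, ← Int.coe_lcm, ← Int.coe_gcd, ← Int.coe_gcd, ← Int.coe_lcm]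
  rw [Int.natCast_dvd_natCast]
  have : (lcm x y).natAbs = Nat.lcm x.natAbs y.natAbs := by
    rw [← Int.coe_lcm]; simp [Int.lcm]
  simpa [Int.gcd, Int.lcm, this] using nat_gcd_lcm_dvd x.natAbs y.natAbs b.natAbs

-- Finset version
lemma finset_gcd_lcm_dvd (s : Finset ℕ) (f : ℕ → ℤ) (b : ℤ) :
    gcd (s.lcm f) b ∣ s.lcm (fun k => gcd (f k) b) := by
  induction s using Finset.induction_on with
  | empty => simp
  | @insert i s hi ih =>
    rw [Finset.lcm_insert, Finset.lcm_insert]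
    exact (int_gcd_lcm_dvd _ _ _).trans (lcm_dvd_lcm dvd_rfl ih)

-- gcd(a^k-1, a^m-1) divides a^(gcd k m) - 1 for k, m ≥ 1
lemma gcd_pow_sub_one_dvd (a : ℤ) {k m : ℕ} (hk : 0 < k) (hm : 0 < m) :
    GCDMonoid.gcd (a ^ k - 1) (a ^ m - 1) ∣ a ^ (Nat.gcd k m) - 1 := by
  set d := GCDMonoid.gcd (a ^ k - 1) (a ^ m - 1) with hd
  set g := Nat.gcd k m with hg
  -- Bezout: find naturals u v with k*u = g + m*v
  obtain ⟨u, v, huv⟩ : ∃ u v : ℕ, k * u = g + m * v := by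
    have hbez : (g : ℤ) = k * Nat.gcdA k m + m * Nat.gcdB k m := Nat.gcd_eq_gcd_ab k m
    set A := Nat.gcdA k m; set B := Nat.gcdB k m
    set t : ℤ := |A| + |B|
    refine ⟨(A + m * t).toNat, (k * t - B).toNat, ?_⟩
    have ht : 0 ≤ t := add_nonneg (abs_nonneg A) (abs_nonneg B)
    have hm1 : (1 : ℤ) ≤ m := by exact_mod_cast hm
    have hk1 : (1 : ℤ) ≤ k := by exact_mod_cast hk
    have hmt : t ≤ m * t := le_mul_of_one_le_left ht hm1
    have hkt : t ≤ k * t := le_mul_of_one_le_left ht hk1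
    have hu : 0 ≤ A + m * t := by
      have h1 : -A ≤ |A| := neg_le_abs A
      have h2 : |A| ≤ t := by simp [t, abs_nonneg B]
      linarith
    have hv : 0 ≤ k * t - B := by
      have h1 : B ≤ |B| := le_abs_self B
      have h2 : |B| ≤ t := by simp [t, abs_nonneg A]
      linarith
    have key : (k : ℤ) * (A + m * t) = g + m * (k * t - B) := by
      rw [hbez]; ring
    have : ((k * (A + m * t).toNat : ℕ) : ℤ) = ((g + m * (k * t - B).toNat : ℕ) : ℤ) := by
      push_cast [Int.toNat_of_nonneg hu, Int.toNat_of_nonneg hv]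
      linarith [key]
    exact_mod_cast this
  have h1 : d ∣ a ^ (k * u) - 1 := (gcd_dvd_left _ _).trans (pow_sub_one_dvd_pow_sub_one a ⟨u, rfl⟩)
  have h2 : d ∣ a ^ (m * v) - 1 := (gcd_dvd_right _ _).trans (pow_sub_one_dvd_pow_sub_one a ⟨v, rfl⟩)
  have h3 : d ∣ a ^ (m * v) * (a ^ g - 1) := by
    have : a ^ (m * v) * (a ^ g - 1) = (a ^ (k * u) - 1) - (a ^ (m * v) - 1) := by
      rw [huv, pow_add]; ring
    rw [this]; exact dvd_sub h1 h2
  have hcop : IsCoprime d (a ^ (m * v)) := by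
    have hc : IsCoprime (a ^ k - 1) (a ^ k) := ⟨-1, 1, by ring⟩
    have hda : IsCoprime d a := by
      have : IsCoprime d (a ^ k) := hc.of_isCoprime_of_dvd_left (gcd_dvd_left _ _)
      exact this.of_isCoprime_of_dvd_right (dvd_pow_self a hk.ne')
    exact hda.pow_right
  exact hcop.dvd_of_dvd_mul_left h3

lemma key_lemma (a : ℤ) : ∀ S : Finset ℕ, 0 ∉ S →
    (∀ k ∈ S, ∀ d, d ∣ k → d ≠ 0 → d ∈ S) →
    Associated (S.lcm fun k => a ^ k - 1)
      (∏ k ∈ S, (Polynomial.cyclotomic k ℤ).eval a) := by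
  intro S
  induction S using Finset.strongInduction with
  | _ S ih =>
  intro h0 hcl
  rcases S.eq_empty_or_nonempty with rfl | hne
  · simp
  set f : ℕ → ℤ := fun k => a ^ k - 1 with hf
  set m := S.max' hne with hmdef
  have hmS : m ∈ S := S.max'_mem hne
  have hm0 : m ≠ 0 := fun h => h0 (h ▸ hmS)
  have hmpos : 0 < m := Nat.pos_of_ne_zero hm0
  set S' := S.erase m with hS'
  have hSS : S = insert m S' := (Finset.insert_erase hmS).symm
  have hmS' : m ∉ S' := Finset.notMem_erase m S
  have hlt : ∀ k ∈ S', k < m := fun k hk =>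
    lt_of_le_of_ne (S.le_max' k (Finset.mem_of_mem_erase hk)) (Finset.ne_of_mem_erase hk)
  have h0' : 0 ∉ S' := fun h => h0 (Finset.mem_of_mem_erase h)
  have hcl' : ∀ k ∈ S', ∀ d, d ∣ k → d ≠ 0 → d ∈ S' := by
    intro k hk d hdk hd0
    have hdS : d ∈ S := hcl k (Finset.mem_of_mem_erase hk) d hdk hd0
    refine Finset.mem_erase.mpr ⟨?_, hdS⟩
    have hdk' : d ≤ k := Nat.le_of_dvd (Nat.pos_of_ne_zero (fun h => h0' (h ▸ hk))) hdk
    exact Nat.ne_of_lt (lt_of_le_of_lt hdk' (hlt k hk))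
  have hsub : S' ⊂ S := Finset.erase_ssubset hmS
  have IH1 := ih S' hsub h0' hcl'
  -- proper divisors of m
  have hPD : m.properDivisors ⊆ S' := by
    intro d hd
    obtain ⟨hdvd, hdlt⟩ := Nat.mem_properDivisors.mp hd
    have hd0 : d ≠ 0 := fun h => hm0 (by simpa [h] using hdvd)
    exact Finset.mem_erase.mpr ⟨hdlt.ne, hcl m hmS d hdvd hd0⟩
  have hPD0 : 0 ∉ m.properDivisors := by
    intro h
    exact hm0 (by simpa using (Nat.mem_properDivisors.mp h).1)
  have hPDcl : ∀ k ∈ m.properDivisors, ∀ d, d ∣ k → d ≠ 0 → d ∈ m.properDivisors := by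
    intro k hk d hdk hd0
    obtain ⟨hkdvd, hklt⟩ := Nat.mem_properDivisors.mp hk
    have hk0 : 0 < k := Nat.pos_of_mem_properDivisors hk
    exact Nat.mem_properDivisors.mpr ⟨hdk.trans hkdvd, lt_of_le_of_lt (Nat.le_of_dvd hk0 hdk) hklt⟩
  have IH2 := ih m.properDivisors (Finset.ssubset_of_subset_of_ssubset hPD hsub) hPD0 hPDcl
  set L' := S'.lcm f with hL'
  set M := m.properDivisors.lcm f with hM
  set P := ∏ d ∈ m.properDivisors, (Polynomial.cyclotomic d ℤ).eval a with hP
  set Q' := ∏ k ∈ S', (Polynomial.cyclotomic k ℤ).eval a with hQ'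
  set Φ := (Polynomial.cyclotomic m ℤ).eval a with hΦ
  -- a^m - 1 = Φ * P
  have hprod : a ^ m - 1 = Φ * P := by
    have h1 := Polynomial.prod_cyclotomic_eq_X_pow_sub_one hmpos ℤ
    have h2 : ((X : ℤ[X]) ^ m - 1).eval a = a ^ m - 1 := by simp
    rw [← h2, ← h1, Polynomial.eval_prod, ← Nat.insert_self_properDivisors hm0,
      Finset.prod_insert Nat.self_notMem_properDivisors]
  -- M divides gcd
  have hMg : M ∣ GCDMonoid.gcd L' (f m) := by
    refine dvd_gcd (Finset.lcm_dvd fun d hd => Finset.dvd_lcm (hPD hd)) ?_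
    refine Finset.lcm_dvd fun d hd => ?_
    exact pow_sub_one_dvd_pow_sub_one a (Nat.mem_properDivisors.mp hd).1
  -- gcd divides M
  have hgM : GCDMonoid.gcd L' (f m) ∣ M := by
    refine (finset_gcd_lcm_dvd S' f (f m)).trans (Finset.lcm_dvd fun k hk => ?_)
    have hkpos : 0 < k := Nat.pos_of_ne_zero (fun h => h0' (h ▸ hk))
    have h1 := gcd_pow_sub_one_dvd a hkpos hmpos
    have hmem : Nat.gcd k m ∈ m.properDivisors :=
      Nat.mem_properDivisors.mpr ⟨Nat.gcd_dvd_right k m,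
        lt_of_le_of_lt (Nat.gcd_le_left m hkpos) (hlt k hk)⟩
    exact h1.trans (Finset.dvd_lcm hmem)
  have hgcdP : Associated (GCDMonoid.gcd L' (f m)) P :=
    (associated_of_dvd_dvd hgM hMg).trans IH2
  -- conclude
  rw [hSS, Finset.lcm_insert, Finset.prod_insert hmS']
  rcases eq_or_ne P 0 with hP0 | hP0
  · have hc0 : f m = 0 := by simp [hf, hprod, hP0]
    obtain ⟨d, hd, hd0⟩ := Finset.prod_eq_zero_iff.mp hP0
    have hQ0 : Q' = 0 := Finset.prod_eq_zero (hPD hd) hd0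
    rw [hc0, lcm_zero_left, ← hQ', hQ0, mul_zero]
  · have h10 := gcd_mul_lcm L' (f m)
    have hchain : Associated (P * GCDMonoid.lcm L' (f m)) (P * (L' * Φ)) := by
      refine (hgcdP.symm.mul_right _).trans (h10.trans ?_)
      have heq : L' * f m = P * (L' * Φ) := by rw [hf]; simp only; rw [hprod]; ring
      rw [heq]
      exact Associated.refl _
    have hlcm : Associated (GCDMonoid.lcm L' (f m)) (L' * Φ) :=
      Associated.of_mul_left hchain (Associated.refl P) hP0
    rw [lcm_comm (f m) L', mul_comm Φ Q']
    exact hlcm.trans (IH1.mul_right Φ)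

theorem stmt0 (a : ℤ) (m : ℕ) (hm : 1 ≤ m) :
    Associated ((Finset.Icc 1 m).lcm (fun k => a ^ k - 1))
      (∏ k ∈ Finset.Icc 1 m, (Polynomial.cyclotomic k ℤ).eval a) := by
  apply key_lemma
  · simp
  · intro k hk d hdk hd0
    rw [Finset.mem_Icc] at hk ⊢
    exact ⟨Nat.one_le_iff_ne_zero.mpr hd0, (Nat.le_of_dvd (by omega) hdk).trans hk.2⟩
end

section
/- For positive integers k and l with k < l, the integer gcd(Φ_k(a), Φ_l(a)) is greater than 1 for some integer a only if l/k is a prime power; in particular, if k < m, k does not divide m, then gcd(Φ_k(a), Φ_m(a)) = 1 for every integer a. -/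
open Polynomial

lemma aux_primroot {q : ℕ} (hq : q.Prime) {n : ℕ} (hn : 0 < n) {a : ℤ}
    (h : (q : ℤ) ∣ (cyclotomic n ℤ).eval a) :
    IsPrimitiveRoot ((a : ZMod q)) (n / q ^ (n.factorization q)) := by
  haveI : Fact q.Prime := ⟨hq⟩
  set m := n / q ^ (n.factorization q) with hm
  have hqm : ¬ q ∣ m := Nat.not_dvd_ordCompl hq hn.ne'
  haveI : NeZero ((m : ZMod q)) :=
    ⟨fun h0 => hqm ((ZMod.natCast_eq_zero_iff m q).mp h0)⟩
  have hroot : (cyclotomic n (ZMod q)).IsRoot ((a : ZMod q)) := by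
    rw [← map_cyclotomic_int n (ZMod q), IsRoot.def]
    rw [eval_intCast_map]
    exact_mod_cast (ZMod.intCast_zmod_eq_zero_iff_dvd _ q).mpr h
  have hdecomp : q ^ (n.factorization q) * m = n := Nat.ordProj_mul_ordCompl_eq_self n q
  rw [← hdecomp] at hroot
  exact (isRoot_cyclotomic_prime_pow_mul_iff_of_charP).mp hroot

lemma aux_main {k l : ℕ} (hk : 0 < k) (hkl : k < l)
    (h : ∃ a : ℤ, 1 < Int.gcd ((cyclotomic k ℤ).eval a) ((cyclotomic l ℤ).eval a)) :
    ∃ p j : ℕ, p.Prime ∧ 1 ≤ j ∧ l = k * p ^ j := by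
  obtain ⟨a, ha⟩ := h
  obtain ⟨q, hq, hqdvd⟩ := (Int.gcd _ _).exists_prime_and_dvd ha.ne'
  have h1 : (q : ℤ) ∣ (cyclotomic k ℤ).eval a :=
    dvd_trans (Int.natCast_dvd_natCast.mpr hqdvd) (Int.gcd_dvd_left _ _)
  have h2 : (q : ℤ) ∣ (cyclotomic l ℤ).eval a :=
    dvd_trans (Int.natCast_dvd_natCast.mpr hqdvd) (Int.gcd_dvd_right _ _)
  have hl : 0 < l := hk.trans hkl
  have hp1 := aux_primroot hq hk h1
  have hp2 := aux_primroot hq hl h2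
  have hmeq : k / q ^ (k.factorization q) = l / q ^ (l.factorization q) := hp1.unique hp2
  set e1 := k.factorization q
  set e2 := l.factorization q
  set m := k / q ^ e1 with hmdef
  have hd1 : q ^ e1 * m = k := Nat.ordProj_mul_ordCompl_eq_self k q
  have hd2 : q ^ e2 * m = l := by rw [hmeq]; exact Nat.ordProj_mul_ordCompl_eq_self l q
  have hmpos : 0 < m := by
    rcases Nat.eq_zero_or_pos m with h0 | h0
    · rw [h0, mul_zero] at hd1; omega
    · exact h0
  have hlt : q ^ e1 < q ^ e2 := by
    by_contra hcon
    push_neg at hcon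
    have := Nat.mul_le_mul_right m hcon
    omega
  have he : e1 < e2 := by
    by_contra hcon
    push_neg at hcon
    exact absurd (Nat.pow_le_pow_right hq.one_lt.le hcon) (not_le.mpr hlt)
  refine ⟨q, e2 - e1, hq, by omega, ?_⟩
  rw [← hd1, ← hd2]
  rw [mul_assoc, mul_comm m (q ^ (e2 - e1)), ← mul_assoc, ← pow_add]
  congr 2
  omega

theorem stmt1 :
    (∀ k l : ℕ, 0 < k → k < l →
      (∃ a : ℤ, 1 < Int.gcd ((Polynomial.cyclotomic k ℤ).eval a)
          ((Polynomial.cyclotomic l ℤ).eval a)) →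
      ∃ p j : ℕ, p.Prime ∧ 1 ≤ j ∧ l = k * p ^ j) ∧
    (∀ k m : ℕ, 0 < k → k < m → ¬ k ∣ m → ∀ a : ℤ,
      Int.gcd ((Polynomial.cyclotomic k ℤ).eval a)
        ((Polynomial.cyclotomic m ℤ).eval a) = 1) := by
  constructor
  · exact fun k l hk hkl h => aux_main hk hkl h
  · intro k m hk hkm hndvd a
    by_contra hne
    rcases Nat.lt_or_ge 1 (Int.gcd ((cyclotomic k ℤ).eval a) ((cyclotomic m ℤ).eval a)) with
      hgt | hle
    · obtain ⟨p, j, hp, hj, hml⟩ := aux_main hk hkm ⟨a, hgt⟩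
      exact hndvd ⟨p ^ j, hml⟩
    · interval_cases h : Int.gcd ((cyclotomic k ℤ).eval a) ((cyclotomic m ℤ).eval a)
      · -- gcd = 0 : both evals are zero
        have h0 := Int.gcd_eq_zero_iff.mp h
        have hr1 : IsRoot (cyclotomic k ℤ) a := h0.1
        have hr2 : IsRoot (cyclotomic m ℤ) a := h0.2
        haveI : NeZero ((k : ℤ)) := ⟨by exact_mod_cast hk.ne'⟩
        haveI : NeZero ((m : ℤ)) := ⟨by exact_mod_cast (hk.trans hkm).ne'⟩
        have hpk := (isRoot_cyclotomic_iff).mp hr1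
        have hpm := (isRoot_cyclotomic_iff).mp hr2
        exact absurd (hpk.unique hpm) (by omega)
      · exact hne rfl
end

section
/- For any integer a and any positive integers k and m, the integer D_m(a) divides D_m(a^k), where D_m(n) = ∏_{j=1}^m Φ_j(n). -/
open Polynomial

/-- `ζ^k` is a primitive `j / gcd j k`-th root of unity if `ζ` is a primitive `j`-th root. -/
lemma aux_pow_primroot {ζ : ℂ} {j k : ℕ} (hj : 0 < j) (hk : 0 < k)
    (h : IsPrimitiveRoot ζ j) : IsPrimitiveRoot (ζ ^ k) (j / Nat.gcd j k) := by
  set g := Nat.gcd j k with hg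
  have hg0 : 0 < g := Nat.gcd_pos_of_pos_left k hj
  have h1 : IsPrimitiveRoot (ζ ^ g) (j / g) := h.pow_of_dvd hg0.ne' (Nat.gcd_dvd_left j k)
  have hcop : Nat.Coprime (k / g) (j / g) := by
    have := Nat.coprime_div_gcd_div_gcd (m := k) (n := j) (by rwa [Nat.gcd_comm])
    rwa [Nat.gcd_comm] at this
  have h2 := h1.pow_of_coprime (k / g) hcop
  have : (ζ ^ g) ^ (k / g) = ζ ^ k := by
    rw [← pow_mul, Nat.mul_div_cancel' (Nat.gcd_dvd_right j k)]
  rwa [this] at h2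

/-- Polynomial-level divisibility over ℚ. -/
lemma aux_dvd_rat (k m : ℕ) (hk : 0 < k) :
    (∏ j ∈ Finset.Icc 1 m, cyclotomic j ℚ) ∣
      ∏ j ∈ Finset.Icc 1 m, (cyclotomic j ℚ).comp (X ^ k) := by
  apply Finset.prod_dvd_of_coprime
  · intro i hi j hj hij
    exact Polynomial.cyclotomic.isCoprime_rat hij
  · intro j hj
    simp only [Finset.mem_Icc] at hj
    have hj0 : 0 < j := hj.1
    set d := j / Nat.gcd j k with hd
    have hdj : d ∣ j := Nat.div_dvd_of_dvd (Nat.gcd_dvd_left j k)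
    have hd0 : 0 < d := Nat.div_pos (Nat.le_of_dvd hj0 (Nat.gcd_dvd_left j k))
      (Nat.gcd_pos_of_pos_left k hj0)
    have hdm : d ∈ Finset.Icc 1 m := Finset.mem_Icc.mpr ⟨hd0, le_trans (Nat.le_of_dvd hj0 hdj) hj.2⟩
    refine dvd_trans ?_ (Finset.dvd_prod_of_mem _ hdm)
    -- show cyclotomic j ℚ ∣ (cyclotomic d ℚ).comp (X ^ k)
    have hζ := Complex.isPrimitiveRoot_exp j hj0.ne'
    set ζ := Complex.exp (2 * Real.pi * Complex.I / j)
    rw [Polynomial.cyclotomic_eq_minpoly_rat hζ hj0]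
    apply minpoly.dvd
    have hroot : IsPrimitiveRoot (ζ ^ k) d := aux_pow_primroot hj0 hk hζ
    have : (cyclotomic d ℂ).IsRoot (ζ ^ k) := hroot.isRoot_cyclotomic hd0
    rw [Polynomial.aeval_comp]
    simp only [map_pow, Polynomial.aeval_X]
    rw [Polynomial.aeval_def, Polynomial.eval₂_eq_eval_map, Polynomial.map_cyclotomic]
    exact this

theorem stmt2 (a : ℤ) (k m : ℕ) (hk : 0 < k) (hm : 0 < m) :
    (∏ j ∈ Finset.Icc 1 m, (Polynomial.cyclotomic j ℤ).eval a) ∣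
      (∏ j ∈ Finset.Icc 1 m, (Polynomial.cyclotomic j ℤ).eval (a ^ k)) := by
  have hdvd : (∏ j ∈ Finset.Icc 1 m, cyclotomic j ℤ) ∣
      ∏ j ∈ Finset.Icc 1 m, (cyclotomic j ℤ).comp (X ^ k) := by
    have hmonic : (∏ j ∈ Finset.Icc 1 m, cyclotomic j ℤ).Monic :=
      monic_prod_of_monic _ _ fun j _ => cyclotomic.monic j ℤ
    rw [← Polynomial.map_dvd_map (Int.castRingHom ℚ)
      (fun x y h => Int.cast_injective h) hmonic]
    simpa [Polynomial.map_prod, Polynomial.map_comp, Polynomial.map_cyclotomic,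
      Polynomial.map_pow] using aux_dvd_rat k m hk
  have := Polynomial.eval_dvd (x := a) hdvd
  simpa [Polynomial.eval_prod, Polynomial.eval_comp] using this
end

section
/- For every prime p and every m ≥ 1, the exponent of the group GL(m, F_p) equals p^⌈log_p m⌉ · lcm(p-1, p^2-1, ..., p^m-1). -/
open Matrix Polynomial UniqueFactorizationMonoid


lemma order_dvd_exponent_GL (p m : ℕ) [Fact p.Prime] {A : Type} [CommRing A] [Algebra (ZMod p) A]
    (b : Module.Basis (Fin m) (ZMod p) A) (u : Aˣ) :
    orderOf u ∣ Monoid.exponent (GL (Fin m) (ZMod p)) := by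
  let f : A →* Matrix (Fin m) (Fin m) (ZMod p) :=
    ((LinearMap.toMatrixAlgEquiv b).toAlgHom.comp (Algebra.lmul (ZMod p) A)).toRingHom.toMonoidHom
  have hf : Function.Injective f := by
    intro x y hxy
    have h2 := congrArg (fun M => ((LinearMap.toMatrixAlgEquiv b).symm M) 1) hxy
    simpa [f] using h2
  have := orderOf_injective (Units.map f) (Units.map_injective hf) u
  exact this ▸ Monoid.order_dvd_exponent _

lemma unipotent_order (p m : ℕ) [Fact p.Prime] (hm : 1 ≤ m) :
    ∃ (A : Type) (_ : CommRing A) (_ : Algebra (ZMod p) A)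
      (b : Module.Basis (Fin m) (ZMod p) A) (u : Aˣ), orderOf u = p ^ Nat.clog p m := by
  have hp1 : 1 < p := (Fact.out : p.Prime).one_lt
  have hX : (X ^ m : (ZMod p)[X]) ≠ 0 := pow_ne_zero _ X_ne_zero
  set A := AdjoinRoot (X ^ m : (ZMod p)[X]) with hA
  let pb := AdjoinRoot.powerBasis hX
  have hdim : pb.dim = m := by
    show (AdjoinRoot.powerBasis hX).dim = m
    rw [AdjoinRoot.powerBasis_dim, natDegree_X_pow]
  let b : Module.Basis (Fin m) (ZMod p) A := pb.basis.reindex (finCongr hdim)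
  haveI : NeZero m := ⟨by omega⟩
  haveI : Nontrivial A := b.repr.toEquiv.nontrivial
  haveI : CharP A p := charP_of_injective_algebraMap (algebraMap (ZMod p) A).injective p
  set r : A := AdjoinRoot.root _ with hr
  have hre : ∀ e, r ^ e = AdjoinRoot.mk _ (X ^ e) := by
    intro e; rw [hr, ← AdjoinRoot.mk_X, ← map_pow]
  have hrm : ∀ e, r ^ e = 0 ↔ m ≤ e := by
    intro e
    rw [hre, AdjoinRoot.mk_eq_zero,
      pow_dvd_pow_iff (X_ne_zero) (Polynomial.not_isUnit_X (R := ZMod p))]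
  have hu : IsUnit (1 + r) := IsNilpotent.isUnit_one_add ⟨m, (hrm m).mpr le_rfl⟩
  refine ⟨A, inferInstance, inferInstance, b, hu.unit, ?_⟩
  have hpow : ∀ s : ℕ, ((hu.unit ^ p ^ s : Aˣ) : A) = 1 + r ^ p ^ s := by
    intro s
    rw [Units.val_pow_eq_pow_val, hu.unit_spec, add_pow_char_pow, one_pow]
  have key : ∀ s : ℕ, hu.unit ^ p ^ s = 1 ↔ m ≤ p ^ s := by
    intro s
    rw [Units.ext_iff, hpow, Units.val_one]
    constructor
    · intro h; exact (hrm _).mp (by linear_combination (norm := abel) h)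
    · intro h; rw [(hrm _).mpr h, add_zero]
  rcases Nat.eq_zero_or_pos (Nat.clog p m) with ht | ht
  · have hm1 : m ≤ p ^ 0 := by
      rw [pow_zero]
      by_contra h3
      have := Nat.clog_pos hp1 (by omega : 2 ≤ m)
      omega
    rw [ht, pow_zero]
    exact orderOf_eq_one_iff.mpr (by simpa using (key 0).mpr hm1)
  · obtain ⟨s, hs⟩ : ∃ s, Nat.clog p m = s + 1 := ⟨Nat.clog p m - 1, by omega⟩
    rw [hs]
    refine orderOf_eq_prime_pow ?_ ?_
    · rw [key]
      have : p ^ s < m := (Nat.lt_clog_iff_pow_lt hp1).mp (by omega)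
      omega
    · rw [key, ← hs]
      exact Nat.le_pow_clog hp1 m

lemma singer_order (p m k : ℕ) [Fact p.Prime] (hk : 1 ≤ k) (hkm : k ≤ m) :
    ∃ (A : Type) (_ : CommRing A) (_ : Algebra (ZMod p) A)
      (b : Module.Basis (Fin m) (ZMod p) A) (u : Aˣ), orderOf u = p ^ k - 1 := by
  let F := GaloisField p k
  let B := Fin (m - k) → ZMod p
  haveI : Finite F := Module.finite_of_finite (ZMod p)
  have hdim : Module.finrank (ZMod p) F = k := GaloisField.finrank p (by omega)
  let bF : Module.Basis (Fin k) (ZMod p) F := (Module.finBasis (ZMod p) F).reindex (finCongr hdim)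
  let bB : Module.Basis (Fin (m - k)) (ZMod p) B := Pi.basisFun _ _
  let b : Module.Basis (Fin m) (ZMod p) (F × B) :=
    (bF.prod bB).reindex (finSumFinEquiv.trans (finCongr (by omega)))
  obtain ⟨g, hg⟩ := IsCyclic.exists_generator (α := Fˣ)
  have hcard : Nat.card Fˣ = p ^ k - 1 := by
    rw [Nat.card_units, GaloisField.card p k (by omega)]
  have hog : orderOf g = p ^ k - 1 := by
    rw [orderOf_eq_card_of_forall_mem_zpowers hg, hcard]
  let φ : Fˣ →* (F × B)ˣ := Units.map (MonoidHom.inl F B)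
  have hφ : Function.Injective φ :=
    Units.map_injective (fun x y h => by simpa using congrArg Prod.fst h)
  exact ⟨F × B, inferInstance, inferInstance, b, φ g, by rw [orderOf_injective φ hφ, hog]⟩

lemma X_pow_sub_one_dvd {R : Type} [CommRing R] {a b : ℕ} (h : a ∣ b) :
    (X ^ a - 1 : R[X]) ∣ X ^ b - 1 := by
  obtain ⟨k, rfl⟩ := h
  have := sub_dvd_pow_sub_pow (X ^ a : R[X]) 1 k
  rwa [one_pow, ← pow_mul] at this

lemma irred_dvd (p : ℕ) [Fact p.Prime] (r : (ZMod p)[X]) (hr : Irreducible r)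
    (h0 : ¬ (X : (ZMod p)[X]) ∣ r) : r ∣ X ^ (p ^ r.natDegree - 1) - 1 := by
  haveI : Fact (Irreducible r) := ⟨hr⟩
  let K := AdjoinRoot r
  let pb := AdjoinRoot.powerBasis hr.ne_zero
  haveI : Fintype K := Module.fintypeOfFintype pb.basis
  have hcard : Fintype.card K = p ^ r.natDegree := by
    rw [Module.card_fintype pb.basis, ZMod.card, Fintype.card_fin,
      AdjoinRoot.powerBasis_dim]
  have hroot : (AdjoinRoot.root r : K) ≠ 0 := by
    intro h
    rw [← AdjoinRoot.mk_X, AdjoinRoot.mk_eq_zero] at h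
    exact h0 (hr.dvd_symm Polynomial.irreducible_X h)
  have h1 : (AdjoinRoot.root r : K) ^ (p ^ r.natDegree - 1) = 1 := by
    rw [← hcard]; exact FiniteField.pow_card_sub_one_eq_one _ hroot
  rw [← AdjoinRoot.mk_eq_zero (f := r)]
  rw [map_sub, map_pow, _root_.map_one, AdjoinRoot.mk_X, h1, sub_self]

lemma poly_dvd (p m n : ℕ) [Fact p.Prime] (hm : 1 ≤ m) (hn : 1 ≤ n)
    (q : (ZMod p)[X]) (hq : q ∣ X ^ n - 1) (hdeg : q.natDegree ≤ m) :
    q ∣ X ^ (p ^ Nat.clog p m * (Finset.Icc 1 m).lcm (fun k => p ^ k - 1)) - 1 := by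
  have hp1 : 1 < p := (Fact.out : p.Prime).one_lt
  set t := Nat.clog p m with ht
  set L := (Finset.Icc 1 m).lcm (fun k => p ^ k - 1) with hL
  set c : (ZMod p)[X] := X ^ L - 1 with hc
  have hXn : (X ^ n - 1 : (ZMod p)[X]) ≠ 0 := by
    have := Polynomial.X_pow_sub_C_ne_zero (R := ZMod p) (by omega : 0 < n) 1
    rwa [Polynomial.C_1] at this
  have hq0 : q ≠ 0 := fun h => hXn (by simpa [h] using hq)
  set s := normalizedFactors q with hs
  have hassoc : Associated s.prod q := prod_normalizedFactors hq0
  -- each factor divides c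
  have hfac : ∀ r ∈ s, r ∣ c := by
    intro r hrs
    have hirr : Irreducible r := irreducible_of_normalized_factor r hrs
    have hrq : r ∣ q := dvd_of_mem_normalizedFactors hrs
    have hrn : r ∣ X ^ n - 1 := hrq.trans hq
    have hX : ¬ (X : (ZMod p)[X]) ∣ r := by
      intro hXr
      have h2 : (X : (ZMod p)[X]) ∣ X ^ n - 1 := hXr.trans hrn
      rw [Polynomial.X_dvd_iff] at h2
      rw [coeff_sub, coeff_X_pow, if_neg (by omega : ¬ 0 = n), coeff_one] at h2
      norm_num at h2
    have hd1 : 1 ≤ r.natDegree := hirr.natDegree_pos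
    have hdm : r.natDegree ≤ m := (natDegree_le_of_dvd hrq hq0).trans hdeg
    have hdvd : p ^ r.natDegree - 1 ∣ L := by
      rw [hL]
      exact Finset.dvd_lcm (Finset.mem_Icc.mpr ⟨hd1, hdm⟩)
    exact (irred_dvd p r hirr hX).trans (X_pow_sub_one_dvd hdvd)
  -- q ∣ c ^ card s
  have h1 : q ∣ c ^ Multiset.card s := by
    calc q ∣ s.prod := hassoc.symm.dvd
    _ ∣ c ^ Multiset.card s := by
        have h3 := Multiset.prod_dvd_prod_of_dvd (S := s) id (fun _ => c) (fun a ha => hfac a ha)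
        rwa [Multiset.map_id, show (fun _ : (ZMod p)[X] => c) = Function.const _ c from rfl,
          Multiset.map_const, Multiset.prod_replicate] at h3
  -- card s ≤ natDegree q
  have h2 : Multiset.card s ≤ q.natDegree := by
    have h0s : (0 : (ZMod p)[X]) ∉ s := fun h =>
      (irreducible_of_normalized_factor 0 h).ne_zero rfl
    have hsum : s.prod.natDegree = (s.map natDegree).sum := natDegree_multiset_prod s h0s
    have hle := Multiset.card_nsmul_le_sum (s := s.map natDegree) (a := 1) (fun x hx => by
      obtain ⟨r, hrs, rfl⟩ := Multiset.mem_map.mp hx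
      exact (irreducible_of_normalized_factor r hrs).natDegree_pos)
    rw [Multiset.card_map, smul_eq_mul, mul_one] at hle
    obtain ⟨u, hu⟩ := hassoc
    have hqd : q.natDegree = s.prod.natDegree := by
      rw [← hu, natDegree_mul (fun h => hq0 (by rw [← hu, h, zero_mul])) u.ne_zero,
        natDegree_eq_zero_of_isUnit u.isUnit, add_zero]
    omega
  have h4 : q ∣ c ^ p ^ t :=
    h1.trans (pow_dvd_pow c ((h2.trans hdeg).trans (Nat.le_pow_clog hp1 m)))
  have h5 : c ^ p ^ t = X ^ (p ^ t * L) - 1 := by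
    rw [hc, sub_pow_char_pow, one_pow, ← pow_mul, mul_comm L]
  rwa [h5] at h4

theorem stmt6 (p : ℕ) (hp : p.Prime) (m : ℕ) (hm : 1 ≤ m) :
    Monoid.exponent (GL (Fin m) (ZMod p)) =
      p ^ Nat.clog p m * (Finset.Icc 1 m).lcm (fun k => p ^ k - 1) := by
  haveI : Fact p.Prime := ⟨hp⟩
  set t := Nat.clog p m with ht
  set L := (Finset.Icc 1 m).lcm (fun k => p ^ k - 1) with hL
  set N := p ^ t * L with hN
  set e := Monoid.exponent (GL (Fin m) (ZMod p)) with he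
  haveI : Finite (GL (Fin m) (ZMod p)) := inferInstance
  -- upper bound : e ∣ N
  have hupper : e ∣ N := by
    refine Monoid.exponent_dvd_of_forall_pow_eq_one ?_
    intro g
    set A : Matrix (Fin m) (Fin m) (ZMod p) := (g : Matrix (Fin m) (Fin m) (ZMod p)) with hA
    set n := orderOf g with hn
    have hn1 : 1 ≤ n := (orderOf_pos g)
    have hgn : g ^ n = 1 := pow_orderOf_eq_one g
    have hAn : A ^ n = 1 := by
      rw [hA, ← Units.val_pow_eq_pow_val, hgn, Units.val_one]
    set q := minpoly (ZMod p) A with hq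
    have hq1 : q ∣ X ^ n - 1 := by
      refine minpoly.dvd _ _ ?_
      rw [map_sub, aeval_X_pow, _root_.map_one, hAn, sub_self]
    have hqdeg : q.natDegree ≤ m := by
      have h1 := natDegree_le_of_dvd (Matrix.minpoly_dvd_charpoly A)
        (Matrix.charpoly_monic A).ne_zero
      rwa [Matrix.charpoly_natDegree_eq_dim, Fintype.card_fin] at h1
    have hdvd := poly_dvd p m n hm hn1 q hq1 hqdeg
    obtain ⟨c, hc⟩ := hdvd
    have haev : aeval A (X ^ N - 1 : (ZMod p)[X]) = 0 := by
      rw [← ht, ← hL, ← hN] at hc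
      rw [hc, _root_.map_mul, minpoly.aeval, zero_mul]
    have hAN : A ^ N = 1 := by
      rw [map_sub, aeval_X_pow, _root_.map_one, sub_eq_zero] at haev
      exact haev
    ext
    rw [Units.val_pow_eq_pow_val, Units.val_one]
    exact congrFun (congrFun hAN _) _
  -- lower bound : N ∣ e
  have hpt : p ^ t ∣ e := by
    obtain ⟨A, _, _, b, u, hu⟩ := unipotent_order p m hm
    exact hu ▸ order_dvd_exponent_GL p m b u
  have hLk : ∀ k ∈ Finset.Icc 1 m, p ^ k - 1 ∣ e := by
    intro k hk
    rw [Finset.mem_Icc] at hk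
    obtain ⟨A, _, _, b, u, hu⟩ := singer_order p m k hk.1 hk.2
    exact hu ▸ order_dvd_exponent_GL p m b u
  have hLe : L ∣ e := Finset.lcm_dvd hLk
  have hcop : Nat.Coprime (p ^ t) L := by
    have hprod : L ∣ ∏ k ∈ Finset.Icc 1 m, (p ^ k - 1) :=
      Finset.lcm_dvd (fun b hb => Finset.dvd_prod_of_mem _ hb)
    have hcp : Nat.Coprime p (∏ k ∈ Finset.Icc 1 m, (p ^ k - 1)) := by
      refine Nat.Coprime.prod_right (fun k hk => ?_)
      rw [Finset.mem_Icc] at hk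
      rw [hp.coprime_iff_not_dvd]
      intro hd
      have h1 : p ∣ p ^ k := dvd_pow_self p (by omega)
      have h2 : p ∣ p ^ k - (p ^ k - 1) := Nat.dvd_sub h1 hd
      have h3 : 1 ≤ p ^ k := Nat.one_le_pow _ _ hp.pos
      have h4 : p ^ k - (p ^ k - 1) = 1 := by omega
      rw [h4] at h2
      exact hp.one_lt.ne' (Nat.dvd_one.mp h2)
    exact ((hcp.coprime_dvd_right hprod)).pow_left _
  exact Nat.dvd_antisymm hupper (hcop.mul_dvd_of_dvd_of_dvd hpt hLe)
end

section
/- For m ≥ 2, any prime p, and any integer k ≥ 2, the number p^k is an m-Carmichael number, i.e., A^(K_m(p^k)) = I for all A ∈ GL(m, ℤ/p^kℤ). -/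
open Finset Matrix

noncomputable def Dm (m n : ℕ) : ℕ :=
  (∏ j ∈ Finset.Icc 1 m, (Polynomial.cyclotomic j ℤ).eval (n : ℤ)).toNat

def nablam (m n : ℕ) : ℕ := ∏ p ∈ n.primeFactors, p ^ (Nat.clog p m - 1)

noncomputable def Km (m n : ℕ) : ℕ := n * nablam m n * Dm m n

def IsMCarmichael (m n : ℕ) : Prop :=
  ¬ n.Prime ∧ 2 ≤ n ∧ ∀ A : GL (Fin m) (ZMod n), A ^ Km m n = 1

open Polynomial in
/-- A nonzero polynomial over a field divides `g ^ d` whenever its degree is at most `d`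
and all its prime factors divide `g`. -/
lemma dvd_pow_of_prime_factors' {F : Type*} [Field F] {g : Polynomial F} :
    ∀ (d : ℕ) (f : Polynomial F), f ≠ 0 → f.natDegree ≤ d →
      (∀ q : Polynomial F, Prime q → q ∣ f → q ∣ g) → f ∣ g ^ d := by
  intro d
  induction d with
  | zero =>
    intro f hf hd _
    have h0 : f.natDegree = 0 := le_antisymm hd (Nat.zero_le _)
    obtain ⟨a, rfl⟩ := Polynomial.natDegree_eq_zero.mp h0
    have ha : a ≠ 0 := fun h => hf (by simp [h])
    exact (Polynomial.isUnit_C.mpr (isUnit_iff_ne_zero.mpr ha)).dvd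
  | succ d ih =>
    intro f hf hd hfac
    by_cases hu : IsUnit f
    · exact hu.dvd
    obtain ⟨q, hqirr, hqdvd⟩ := WfDvdMonoid.exists_irreducible_factor hu hf
    have hq : Prime q := hqirr.prime
    obtain ⟨f', rfl⟩ := hqdvd
    have hq0 : q ≠ 0 := hq.ne_zero
    have hf'0 : f' ≠ 0 := right_ne_zero_of_mul hf
    have hqd : 1 ≤ q.natDegree := hqirr.natDegree_pos
    have hmul := Polynomial.natDegree_mul hq0 hf'0
    have hdeg : f'.natDegree ≤ d := by omega
    have h1 : f' ∣ g ^ d :=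
      ih f' hf'0 hdeg (fun r hr hrd => hfac r hr (hrd.mul_left q))
    have h2 : q ∣ g := hfac q hq (dvd_mul_right q f')
    calc q * f' ∣ g * g ^ d := mul_dvd_mul h2 h1
    _ = g ^ (d + 1) := by rw [pow_succ, mul_comm]

/-- `p ^ j - 1` divides `Dm m (p ^ k)` for `1 ≤ j ≤ m`. -/
lemma pow_sub_one_dvd_Dm {m p k j : ℕ} (hp : 2 ≤ p) (hk : 1 ≤ k) (hj1 : 1 ≤ j) (hjm : j ≤ m) :
    p ^ j - 1 ∣ Dm m (p ^ k) := by
  have hpk2 : 2 ≤ p ^ k := le_trans hp (Nat.le_self_pow (by omega) p)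
  have hx : (1 : ℤ) < ((p ^ k : ℕ) : ℤ) := by exact_mod_cast hpk2
  have hpos : ∀ i ∈ Finset.Icc 1 m, 0 < (Polynomial.cyclotomic i ℤ).eval ((p ^ k : ℕ) : ℤ) :=
    fun i _ => Polynomial.cyclotomic_pos' i hx
  have hP : (0 : ℤ) < ∏ i ∈ Finset.Icc 1 m, (Polynomial.cyclotomic i ℤ).eval ((p ^ k : ℕ) : ℤ) :=
    Finset.prod_pos hpos
  have hDm : (Dm m (p ^ k) : ℤ)
      = ∏ i ∈ Finset.Icc 1 m, (Polynomial.cyclotomic i ℤ).eval ((p ^ k : ℕ) : ℤ) :=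
    Int.toNat_of_nonneg hP.le
  have hsub : j.divisors ⊆ Finset.Icc 1 m := by
    intro i hi
    rcases Nat.mem_divisors.mp hi with ⟨hid, hj0⟩
    have h1 := Nat.le_of_dvd (by omega) hid
    have h2 := Nat.pos_of_dvd_of_pos hid (by omega)
    simp only [Finset.mem_Icc]
    omega
  have h2 : (((p ^ k : ℕ) : ℤ) ^ j - 1)
      ∣ ∏ i ∈ Finset.Icc 1 m, (Polynomial.cyclotomic i ℤ).eval ((p ^ k : ℕ) : ℤ) := by
    have heq := Polynomial.prod_cyclotomic_eq_X_pow_sub_one (show 0 < j by omega) ℤ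
    have heval : ((p ^ k : ℕ) : ℤ) ^ j - 1
        = ∏ i ∈ j.divisors, (Polynomial.cyclotomic i ℤ).eval ((p ^ k : ℕ) : ℤ) := by
      rw [← Polynomial.eval_prod, heq]
      simp
    rw [heval]
    exact Finset.prod_dvd_prod_of_subset _ _ _ hsub
  have h1 : ((p : ℤ) ^ j - 1) ∣ (((p ^ k : ℕ) : ℤ) ^ j - 1) := by
    have h := sub_dvd_pow_sub_pow ((p : ℤ) ^ j) 1 k
    rw [one_pow, ← pow_mul, mul_comm j k, pow_mul] at h
    push_cast
    exact h
  have hZ : ((p : ℤ) ^ j - 1) ∣ (Dm m (p ^ k) : ℤ) := hDm ▸ h1.trans h2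
  have hcast : ((p ^ j - 1 : ℕ) : ℤ) = (p : ℤ) ^ j - 1 := by
    have : 1 ≤ p ^ j := Nat.one_le_pow _ _ (by omega)
    push_cast [this]
    ring
  rw [← Int.natCast_dvd_natCast, hcast]
  exact hZ

/-- Binomial step: `(1 + p^t * N) ^ p = 1 + p^(t+1) * N'` in any ring. -/
lemma pow_prime_step {R : Type*} [Ring R] {p : ℕ} (hp : p.Prime) (t : ℕ) (ht : 1 ≤ t) (N : R) :
    ∃ N' : R, (1 + (p : R) ^ t * N) ^ p = 1 + (p : R) ^ (t + 1) * N' := by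
  suffices h : ((p : R) ^ (t + 1)) ∣ ((1 + (p : R) ^ t * N) ^ p - 1) by
    obtain ⟨N', hN'⟩ := h
    exact ⟨N', sub_eq_iff_eq_add'.mp hN'⟩
  have hc : Commute ((p : R) ^ t * N) (1 : R) := Commute.one_right _
  rw [add_comm (1 : R) ((p : R) ^ t * N), hc.add_pow, Finset.sum_range_succ']
  simp only [pow_zero, one_pow, one_mul, mul_one, Nat.choose_zero_right, Nat.cast_one]
  rw [add_sub_cancel_right]
  apply Finset.dvd_sum
  intro i _
  have hmp : ((p : R) ^ t * N) ^ (i + 1) = (p : R) ^ (t * (i + 1)) * N ^ (i + 1) := by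
    rw [(Commute.pow_left (Nat.cast_commute p N) t).mul_pow, ← pow_mul]
  rw [hmp]
  rcases Nat.eq_zero_or_pos i with rfl | hi
  · refine ⟨N, ?_⟩
    simp only [zero_add, pow_one, mul_one, Nat.choose_one_right]
    rw [mul_assoc, ← (Nat.cast_commute p N).eq, ← mul_assoc, ← pow_succ]
  · have hle : t + 1 ≤ t * (i + 1) := by nlinarith
    exact ((pow_dvd_pow (p : R) hle).mul_right _).mul_right _

/-- An element of the form `1 + p * N` has order dividing `p ^ (k - 1)` whenever `p ^ k = 0`. -/
lemma unipotent_pow {R : Type*} [Ring R] {p : ℕ} (hp : p.Prime) (k : ℕ) (hk : 1 ≤ k)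
    (hpk : (p : R) ^ k = 0) (B N : R) (hB : B = 1 + (p : R) * N) : B ^ (p ^ (k - 1)) = 1 := by
  have key : ∀ s : ℕ, ∃ N' : R, B ^ (p ^ s) = 1 + (p : R) ^ (s + 1) * N' := by
    intro s
    induction s with
    | zero => exact ⟨N, by simpa using hB⟩
    | succ s ih =>
      obtain ⟨N', hN'⟩ := ih
      obtain ⟨N'', hN''⟩ := pow_prime_step hp (s + 1) (by omega) N'
      refine ⟨N'', ?_⟩
      rw [pow_succ, pow_mul, hN', hN'']
  obtain ⟨N', hN'⟩ := key (k - 1)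
  have hkk : k - 1 + 1 = k := by omega
  rw [hN', hkk, hpk, zero_mul, add_zero]

open Polynomial in
/-- Invertible matrices over `ZMod p` satisfy `M ^ (D * p^(clog p m)) = 1` when
`p ^ j - 1 ∣ D` for all `1 ≤ j ≤ m`. -/
lemma matrix_pow_eq_one {p m : ℕ} (hp : p.Prime) (D : ℕ)
    (hD : ∀ j, 1 ≤ j → j ≤ m → p ^ j - 1 ∣ D)
    (M : Matrix (Fin m) (Fin m) (ZMod p)) (hdet : IsUnit M.det) :
    M ^ (D * p ^ Nat.clog p m) = 1 := by
  haveI := Fact.mk hp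
  have hchar_ne : M.charpoly ≠ 0 := M.charpoly_monic.ne_zero
  have hdeg : M.charpoly.natDegree = m := by
    simpa using M.charpoly_natDegree_eq_dim
  have hc0 : M.charpoly.coeff 0 ≠ 0 := by
    intro h
    rw [Matrix.det_eq_sign_charpoly_coeff, h, mul_zero] at hdet
    exact not_isUnit_zero hdet
  have hXdvd : ¬ (X : Polynomial (ZMod p)) ∣ M.charpoly := by
    rw [Polynomial.X_dvd_iff]; exact hc0
  have hfac : ∀ q : Polynomial (ZMod p), Prime q → q ∣ M.charpoly →
      q ∣ (X : Polynomial (ZMod p)) ^ D - 1 := by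
    intro q hq hqc
    have hj1 : 1 ≤ q.natDegree := hq.irreducible.natDegree_pos
    have hjm : q.natDegree ≤ m := hdeg ▸ Polynomial.natDegree_le_of_dvd hqc hchar_ne
    haveI : Fact (Irreducible q) := ⟨hq.irreducible⟩
    have hq0 : q ≠ 0 := hq.ne_zero
    set j := q.natDegree with hjdef
    letI pb := AdjoinRoot.powerBasis hq0
    haveI : Fintype (AdjoinRoot q) := Module.fintypeOfFintype pb.basis
    have hcard : Fintype.card (AdjoinRoot q) = p ^ j := by
      rw [Module.card_fintype pb.basis, ZMod.card, Fintype.card_fin]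
      congr 1
    have hx0 : AdjoinRoot.root q ≠ 0 := by
      intro h
      apply hXdvd
      have hqX : q ∣ (X : Polynomial (ZMod p)) := by
        rw [← AdjoinRoot.mk_eq_zero, AdjoinRoot.mk_X]; exact h
      exact ((hq.irreducible.associated_of_dvd Polynomial.irreducible_X hqX).symm.dvd).trans hqc
    have hx1 : AdjoinRoot.root q ^ (p ^ j - 1) = 1 := by
      have := FiniteField.pow_card_sub_one_eq_one (AdjoinRoot.root q) hx0
      rwa [hcard] at this
    have hq1 : q ∣ (X : Polynomial (ZMod p)) ^ (p ^ j - 1) - 1 := by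
      rw [← AdjoinRoot.mk_eq_zero, map_sub, map_pow, AdjoinRoot.mk_X, _root_.map_one]
      exact sub_eq_zero_of_eq hx1
    obtain ⟨t, ht⟩ := hD j hj1 hjm
    refine hq1.trans ?_
    have h := sub_dvd_pow_sub_pow ((X : Polynomial (ZMod p)) ^ (p ^ j - 1)) 1 t
    rwa [one_pow, ← pow_mul, ← ht] at h
  have hdvd1 : M.charpoly ∣ ((X : Polynomial (ZMod p)) ^ D - 1) ^ m :=
    dvd_pow_of_prime_factors' m M.charpoly hchar_ne hdeg.le hfac
  have hdvd2 : ((X : Polynomial (ZMod p)) ^ D - 1) ^ m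
      ∣ ((X : Polynomial (ZMod p)) ^ D - 1) ^ (p ^ Nat.clog p m) :=
    pow_dvd_pow _ (Nat.le_pow_clog hp.one_lt m)
  have hfresh : ((X : Polynomial (ZMod p)) ^ D - 1) ^ (p ^ Nat.clog p m)
      = (X : Polynomial (ZMod p)) ^ (D * p ^ Nat.clog p m) - 1 := by
    rw [sub_pow_char_pow, ← pow_mul, one_pow]
  obtain ⟨t, ht⟩ := hdvd1.trans hdvd2
  rw [hfresh] at ht
  have haev := congrArg (Polynomial.aeval M) ht
  rw [_root_.map_mul, Matrix.aeval_self_charpoly, zero_mul, map_sub, map_pow, Polynomial.aeval_X,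
    _root_.map_one, sub_eq_zero] at haev
  exact haev

theorem stmt7 (m : ℕ) (hm : 2 ≤ m) (p : ℕ) (hp : p.Prime) (k : ℕ) (hk : 2 ≤ k) :
    IsMCarmichael m (p ^ k) := by
  have hp2 := hp.two_le
  have hk0 : k ≠ 0 := by omega
  have hn2 : 2 ≤ p ^ k := le_trans hp2 (Nat.le_self_pow hk0 p)
  refine ⟨?_, hn2, ?_⟩
  · intro hpr
    rcases hpr.eq_one_or_self_of_dvd p (dvd_pow_self p hk0) with h | h
    · omega
    · have : p ^ 1 = p ^ k := by rw [pow_one]; exact h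
      have := Nat.pow_right_injective hp2 this
      omega
  · intro A
    haveI := Fact.mk hp
    set c := Nat.clog p m with hc
    have hc1 : 1 ≤ c := Nat.clog_pos hp.one_lt hm
    haveI : NeZero (p ^ k) := ⟨by positivity⟩
    -- compute Km
    have hKm : Km m (p ^ k) = Dm m (p ^ k) * p ^ c * p ^ (k - 1) := by
      show p ^ k * nablam m (p ^ k) * Dm m (p ^ k) = _
      have hpf : (p ^ k).primeFactors = {p} := by
        rw [Nat.primeFactors_pow p hk0, Nat.Prime.primeFactors hp]
      have hnab : nablam m (p ^ k) = p ^ (c - 1) := by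
        rw [nablam, hpf, Finset.prod_singleton, hc]
      have hpp : p ^ k * p ^ (c - 1) = p ^ c * p ^ (k - 1) := by
        rw [← pow_add, ← pow_add]
        congr 1
        omega
      rw [hnab, hpp]
      ring
    -- the matrix
    set M : Matrix (Fin m) (Fin m) (ZMod (p ^ k)) := (A : Matrix (Fin m) (Fin m) (ZMod (p ^ k))) with hM
    have hpdvd : p ∣ p ^ k := dvd_pow_self p hk0
    set φ : ZMod (p ^ k) →+* ZMod p := ZMod.castHom hpdvd (ZMod p) with hφ
    have hdet : IsUnit ((M.map φ).det) := by
      have h1 : IsUnit M := A.isUnit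
      have h2 : IsUnit M.det := (Matrix.isUnit_iff_isUnit_det M).mp h1
      have h3 := h2.map φ
      rwa [RingHom.map_det] at h3
    have hMbar : (M.map φ) ^ (Dm m (p ^ k) * p ^ c) = 1 := by
      have := matrix_pow_eq_one hp (Dm m (p ^ k))
        (fun j hj1 hjm => pow_sub_one_dvd_Dm hp2 (by omega) hj1 hjm) (M.map φ) hdet
      rwa [← hc] at this
    set e : ℕ := Dm m (p ^ k) * p ^ c with he
    have hmap : (M ^ e).map φ = 1 := by
      have : φ.mapMatrix (M ^ e) = (φ.mapMatrix M) ^ e := map_pow _ _ _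
      rw [RingHom.mapMatrix_apply, RingHom.mapMatrix_apply] at this
      rw [this, hMbar]
    -- entries of M ^ e - 1 are divisible by p
    have hent : ∀ i j : Fin m, ∃ y : ZMod (p ^ k), (M ^ e - 1) i j = (p : ZMod (p ^ k)) * y := by
      intro i j
      have h0 : φ ((M ^ e - 1) i j) = 0 := by
        have hmap' : (M ^ e - 1).map φ = 0 := by
          have : (M ^ e - 1).map φ = (M ^ e).map φ - (1 : Matrix (Fin m) (Fin m) (ZMod (p ^ k))).map φ :=
            Matrix.map_sub _ (map_sub φ) _ _
          rw [this, hmap, Matrix.map_one φ (map_zero φ) (_root_.map_one φ), sub_self]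
        have := congrFun (congrFun hmap' i) j
        simpa [Matrix.map_apply] using this
      obtain ⟨a, ha⟩ := ZMod.natCast_zmod_surjective ((M ^ e - 1) i j)
      rw [← ha, hφ, map_natCast, ZMod.natCast_eq_zero_iff] at h0
      obtain ⟨b, hb⟩ := h0
      refine ⟨(b : ZMod (p ^ k)), ?_⟩
      rw [← ha, hb]
      push_cast
      ring
    choose N hN using hent
    have hB : M ^ e = 1 + ((p : ℕ) : Matrix (Fin m) (Fin m) (ZMod (p ^ k))) * Matrix.of N := by
      ext i j
      have h := hN i j
      rw [Matrix.sub_apply] at h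
      rw [Matrix.add_apply, ← Matrix.diagonal_natCast, Matrix.diagonal_mul, Matrix.of_apply]
      linear_combination h
    have hpk0 : ((p : ℕ) : Matrix (Fin m) (Fin m) (ZMod (p ^ k))) ^ k = 0 := by
      rw [← Nat.cast_pow, ← Matrix.diagonal_natCast]
      have : ((p ^ k : ℕ) : ZMod (p ^ k)) = 0 := by
        exact ZMod.natCast_self _
      rw [this, Matrix.diagonal_zero]
    have hfin : (M ^ e) ^ (p ^ (k - 1)) = 1 :=
      unipotent_pow hp k (by omega) hpk0 (M ^ e) (Matrix.of N) hB
    have hfinal : M ^ Km m (p ^ k) = 1 := by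
      rw [hKm, pow_mul]
      exact hfin
    exact Units.ext (by
      rw [Units.val_pow_eq_pow_val, Units.val_one]
      exact hfinal)
end

section
/- Let m ≥ 2 and let n be a composite natural number. If D_m(p) divides K_m(n) for every prime p dividing n, then n is an m-Carmichael number, i.e., A^(K_m(n)) = I for all A ∈ GL(m, ℤ/nℤ). -/
open Finset Matrix

open Polynomial
lemma dm_int (m p : ℕ) (hp : 2 ≤ p) :
    (Dm m p : ℤ) = ∏ j ∈ Finset.Icc 1 m, (Polynomial.cyclotomic j ℤ).eval (p : ℤ) := by
  have hpos : 0 < ∏ j ∈ Finset.Icc 1 m, (Polynomial.cyclotomic j ℤ).eval (p : ℤ) :=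
    Finset.prod_pos fun j hj => Polynomial.cyclotomic_pos' j (by exact_mod_cast hp)
  simpa [Dm] using Int.toNat_of_nonneg hpos.le

lemma pow_sub_one_dvd_Dm_s8 {m p d : ℕ} (hp : 2 ≤ p) (hd : 0 < d) (hdm : d ≤ m) :
    p ^ d - 1 ∣ Dm m p := by
  have key : ((p : ℤ) ^ d - 1) ∣ (Dm m p : ℤ) := by
    rw [dm_int m p hp]
    have h1 : ∏ j ∈ d.divisors, (Polynomial.cyclotomic j ℤ).eval (p : ℤ) = (p : ℤ) ^ d - 1 := by
      have := Polynomial.prod_cyclotomic_eq_X_pow_sub_one hd ℤ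
      calc ∏ j ∈ d.divisors, (Polynomial.cyclotomic j ℤ).eval (p : ℤ)
          = (∏ j ∈ d.divisors, Polynomial.cyclotomic j ℤ).eval (p : ℤ) := by
            rw [Polynomial.eval_prod]
        _ = (p : ℤ) ^ d - 1 := by rw [this]; simp
    rw [← h1]
    refine Finset.prod_dvd_prod_of_subset _ _ _ ?_
    intro j hj
    rw [Nat.mem_divisors] at hj
    exact Finset.mem_Icc.2 ⟨Nat.pos_of_dvd_of_pos hj.1 hd,
      le_trans (Nat.le_of_dvd hd hj.1) hdm⟩
  have hcast : ((p ^ d - 1 : ℕ) : ℤ) = (p : ℤ) ^ d - 1 := by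
    have : 1 ≤ p ^ d := Nat.one_le_pow _ _ (by omega)
    push_cast [this]; ring
  exact_mod_cast hcast ▸ key

lemma not_dvd_Dm {m p : ℕ} (hp : p.Prime) : ¬ (p : ℤ) ∣ (Dm m p : ℤ) := by
  rw [dm_int m p hp.two_le]
  intro hdvd
  have hprime : Prime (p : ℤ) := Nat.prime_iff_prime_int.1 hp
  obtain ⟨j, hj, hjd⟩ := hprime.exists_mem_finset_dvd hdvd
  rw [Finset.mem_Icc] at hj
  have h0 : (p : ℤ) ∣ (Polynomial.cyclotomic j ℤ).eval (p : ℤ) - (Polynomial.cyclotomic j ℤ).eval 0 := by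
    simpa using Polynomial.sub_dvd_eval_sub (p : ℤ) 0 (Polynomial.cyclotomic j ℤ)
  have h1 : (p : ℤ) ∣ (Polynomial.cyclotomic j ℤ).eval 0 := (dvd_sub_right hjd).mp h0
  have hunit : IsUnit ((Polynomial.cyclotomic j ℤ).eval 0) := by
    rcases eq_or_lt_of_le hj.1 with h | h
    · rw [← h]
      simp [Polynomial.cyclotomic_one]
    · have : (Polynomial.cyclotomic j ℤ).eval 0 = 1 := by
        rw [← Polynomial.coeff_zero_eq_eval_zero]
        exact Polynomial.cyclotomic_coeff_zero ℤ h
      simp [this]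
  exact hprime.not_unit (isUnit_of_dvd_unit h1 hunit)

lemma not_dvd_Dm' {m p : ℕ} (hp : p.Prime) : ¬ p ∣ Dm m p := by
  intro hc; exact not_dvd_Dm hp (Int.natCast_dvd_natCast.2 hc)

lemma one_add_pow {S : Type*} [CommRing S] (a : S) (k : ℕ) :
    ∃ z, (1 + a) ^ k = 1 + (k : S) * a + a ^ 2 * z := by
  induction k with
  | zero => exact ⟨0, by push_cast; ring⟩
  | succ k ih =>
    obtain ⟨z, hz⟩ := ih
    refine ⟨(k : S) + z + a * z, ?_⟩
    rw [pow_succ, hz]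
    push_cast
    ring

lemma key_lift {S : Type*} [CommRing S] (p : ℕ) (x : S) (e : ℕ) :
    ∃ y, (1 + (p : S) * x) ^ (p ^ e) = 1 + (p : S) ^ (e + 1) * y := by
  induction e with
  | zero => exact ⟨x, by simp⟩
  | succ e ih =>
    obtain ⟨y, hy⟩ := ih
    obtain ⟨z, hz⟩ := one_add_pow ((p : S) ^ (e + 1) * y) p
    refine ⟨y + (p : S) ^ e * (y ^ 2 * z), ?_⟩
    rw [pow_succ, pow_mul, hy, hz]
    have h2 : ((p : S) ^ (e + 1) * y) ^ 2 = (p : S) ^ (e + 2) * ((p:S) ^ e * y ^ 2) := by ring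
    rw [h2]
    ring

lemma matrix_lift {R : Type*} [CommRing R] {m p e : ℕ} (he : 1 ≤ e)
    (hpe : (p : R) ^ e = 0) (N : Matrix (Fin m) (Fin m) R) :
    (1 + (p : R) • N) ^ (p ^ (e - 1)) = 1 := by
  obtain ⟨y, hy⟩ := key_lift p (Polynomial.X : R[X]) (e - 1)
  rw [show e - 1 + 1 = e from by omega] at hy
  have hzero : ((p : R[X])) ^ e = 0 := by
    rw [show ((p : R[X])) = Polynomial.C ((p : R)) from (Polynomial.C_eq_natCast _).symm,
      ← Polynomial.C_pow, hpe, Polynomial.C_0]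
  rw [hzero, zero_mul, add_zero] at hy
  have := congrArg (Polynomial.aeval N) hy
  simp only [map_pow, map_add, _root_.map_one, _root_.map_mul, Polynomial.aeval_natCast,
    Polynomial.aeval_X] at this
  rw [← this]
  congr 2
  rw [Nat.cast_smul_eq_nsmul, nsmul_eq_mul]

-- irreducible monic polynomial ≠ X over ZMod p divides X^D - 1 when p^deg - 1 ∣ D
lemma irred_dvd_X_pow_sub_one {p : ℕ} [Fact p.Prime] {g : (ZMod p)[X]}
    (hg : Irreducible g) (hmonic : g.Monic) (hgX : g ≠ X) {D : ℕ}
    (hD : p ^ g.natDegree - 1 ∣ D) : g ∣ X ^ D - 1 := by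
  haveI : Fact (Irreducible g) := ⟨hg⟩
  set F := AdjoinRoot g
  set r : F := AdjoinRoot.root g
  have haev : Polynomial.aeval r g = 0 := by
    rw [AdjoinRoot.aeval_eq]
    exact AdjoinRoot.mk_self
  have hmin : minpoly (ZMod p) r = g :=
    (minpoly.eq_of_irreducible_of_monic hg haev hmonic).symm
  have hr0 : r ≠ 0 := by
    intro h
    apply hgX
    rw [← hmin, h, minpoly.zero]
  set pb := AdjoinRoot.powerBasis (hg.ne_zero) with hpb
  haveI : Module.Finite (ZMod p) F := pb.finite
  haveI : Finite F := Module.finite_of_finite (ZMod p)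
  haveI : Fintype F := Fintype.ofFinite F
  have hcard : Fintype.card F = p ^ g.natDegree := by
    rw [Module.card_eq_pow_finrank (K := ZMod p), ZMod.card, pb.finrank]
    rw [hpb, AdjoinRoot.powerBasis_dim]
  have hr1 : r ^ (p ^ g.natDegree - 1) = 1 := by
    rw [← hcard]
    exact FiniteField.pow_card_sub_one_eq_one r hr0
  obtain ⟨t, ht⟩ := hD
  have hrD : r ^ D = 1 := by
    rw [ht, pow_mul, hr1, one_pow]
  rw [← hmin]
  apply minpoly.dvd
  simp [hrD]

-- product of multiset of divisors of h divides h ^ card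
lemma multiset_prod_dvd_pow {K : Type*} [CommMonoid K] (h : K) (S : Multiset K)
    (hS : ∀ g ∈ S, g ∣ h) : S.prod ∣ h ^ Multiset.card S := by
  induction S using Multiset.induction with
  | empty => simp
  | cons a S ih =>
    rw [Multiset.prod_cons, Multiset.card_cons, pow_succ']
    exact mul_dvd_mul (hS a (Multiset.mem_cons_self a S))
      (ih fun g hg => hS g (Multiset.mem_cons_of_mem hg))

lemma multiset_card_le_natDegree {K : Type*} [Field K] (S : Multiset K[X])
    (hS : ∀ g ∈ S, Irreducible g) : Multiset.card S ≤ S.prod.natDegree := by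
  induction S using Multiset.induction with
  | empty => simp
  | cons a S ih =>
    have ha := hS a (Multiset.mem_cons_self a S)
    have hS' : ∀ g ∈ S, Irreducible g := fun g hg => hS g (Multiset.mem_cons_of_mem hg)
    have hane : a ≠ 0 := ha.ne_zero
    have hprodne : S.prod ≠ 0 :=
      Multiset.prod_ne_zero fun h0 => (hS' 0 h0).ne_zero rfl
    rw [Multiset.prod_cons, Multiset.card_cons, Polynomial.natDegree_mul hane hprodne]
    have h1 : 1 ≤ a.natDegree := ha.natDegree_pos
    have := ih hS'
    omega

lemma charpoly_dvd {p m : ℕ} [Fact p.Prime] (M : Matrix (Fin m) (Fin m) (ZMod p))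
    (hdet : IsUnit M.det) {D : ℕ}
    (hD : ∀ d, 0 < d → d ≤ m → p ^ d - 1 ∣ D)
    (hirr : ∀ g : (ZMod p)[X], Irreducible g → g.Monic → g ≠ X →
      p ^ g.natDegree - 1 ∣ D → g ∣ X ^ D - 1) :
    M.charpoly ∣ ((X : (ZMod p)[X]) ^ D - 1) ^ m := by
  set f := M.charpoly with hf
  have hfm : f.Monic := Matrix.charpoly_monic M
  have hf0 : f ≠ 0 := hfm.ne_zero
  have hdeg : f.natDegree = m := by
    rw [hf, Matrix.charpoly_natDegree_eq_dim, Fintype.card_fin]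
  set S := UniqueFactorizationMonoid.factors f with hS
  have hassoc : Associated S.prod f := UniqueFactorizationMonoid.factors_prod hf0
  have hirrS : ∀ g ∈ S, Irreducible g := fun g hg =>
    UniqueFactorizationMonoid.irreducible_of_factor g hg
  have hXndvd : ¬ (X : (ZMod p)[X]) ∣ f := by
    intro hXf
    have hc0 : f.coeff 0 = 0 := by
      obtain ⟨q, hq⟩ := hXf
      simp [hq, Polynomial.coeff_X_mul_zero, Polynomial.mul_coeff_zero]
    have hdet0 : M.det = 0 := by
      rw [Matrix.det_eq_sign_charpoly_coeff, ← hf, hc0, mul_zero]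
    rw [hdet0] at hdet
    exact not_isUnit_zero hdet
  have hdvd : ∀ g ∈ S, g ∣ (X : (ZMod p)[X]) ^ D - 1 := by
    intro g hgS
    have hgi := hirrS g hgS
    have hg0 : g ≠ 0 := hgi.ne_zero
    have hgf : g ∣ f := UniqueFactorizationMonoid.dvd_of_mem_factors hgS
    have hasc : Associated g (normalize g) := (normalize_associated g).symm
    set g' := normalize g with hg'
    have hgi' : Irreducible g' := hasc.irreducible hgi
    have hgm' : g'.Monic := Polynomial.monic_normalize hg0
    have hgf' : g' ∣ f := hasc.symm.dvd.trans hgf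
    have hgdeg : g'.natDegree ≤ m := hdeg ▸ Polynomial.natDegree_le_of_dvd hgf' hf0
    have hgpos : 0 < g'.natDegree := hgi'.natDegree_pos
    have hgX : g' ≠ X := by
      intro hx
      exact hXndvd (hx ▸ hgf')
    have := hirr g' hgi' hgm' hgX (hD _ hgpos hgdeg)
    exact hasc.dvd.trans this
  have hcard : Multiset.card S ≤ m := by
    have h1 := multiset_card_le_natDegree S hirrS
    obtain ⟨u, hu⟩ := hassoc
    have hu0 : (u : (ZMod p)[X]).natDegree = 0 :=
      Polynomial.natDegree_eq_zero_of_isUnit u.isUnit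
    have hSne : S.prod ≠ 0 := fun h0 => hf0 (by rw [← hu, h0, zero_mul])
    have : S.prod.natDegree = m := by
      have := Polynomial.natDegree_mul hSne u.isUnit.ne_zero
      rw [hu, hdeg, hu0, add_zero] at this
      omega
    omega
  calc f ∣ S.prod := hassoc.symm.dvd
    _ ∣ ((X : (ZMod p)[X]) ^ D - 1) ^ Multiset.card S := multiset_prod_dvd_pow _ S hdvd
    _ ∣ ((X : (ZMod p)[X]) ^ D - 1) ^ m := pow_dvd_pow _ hcard

lemma unipotent_pow_s8 {p m c : ℕ} [Fact p.Prime] (N : Matrix (Fin m) (Fin m) (ZMod p))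
    (hN : N ^ m = 0) (hm : m ≤ p ^ c) : (1 + N) ^ p ^ c = 1 := by
  have hpoly : ((1 : (ZMod p)[X]) + X) ^ p ^ c = 1 + X ^ p ^ c := by
    rw [add_pow_char_pow]
    simp
  have h := congrArg (Polynomial.aeval N) hpoly
  simp only [map_pow, map_add, _root_.map_one, Polynomial.aeval_X] at h
  rw [h, show p ^ c = m + (p ^ c - m) from by omega, pow_add, hN, zero_mul, add_zero]

lemma prime_pow_step {p e m : ℕ} [Fact p.Prime] (he : 1 ≤ e) (hm : 2 ≤ m)
    (B : GL (Fin m) (ZMod (p ^ e))) :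
    B ^ (p ^ (e - 1) * p ^ Nat.clog p m * Dm m p) = 1 := by
  have hp : p.Prime := Fact.out
  haveI : NeZero (p ^ e) := ⟨pow_ne_zero e hp.pos.ne'⟩
  set R := ZMod (p ^ e) with hR
  have hdvdp : p ∣ p ^ e := dvd_pow_self p (by omega)
  set π : ZMod (p ^ e) →+* ZMod p := ZMod.castHom hdvdp (ZMod p) with hπ
  set M : Matrix (Fin m) (Fin m) R := (B : Matrix (Fin m) (Fin m) R) with hM
  set M' : Matrix (Fin m) (Fin m) (ZMod p) := M.map π with hM'
  have hMunit : IsUnit M.det := (Matrix.isUnit_iff_isUnit_det M).1 ⟨B, rfl⟩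
  have hdet : IsUnit M'.det := by
    rw [hM', show M.map π = π.mapMatrix M from rfl, ← RingHom.map_det]
    exact hMunit.map π
  set D := Dm m p with hD
  set c := Nat.clog p m with hc
  have hDd : ∀ d, 0 < d → d ≤ m → p ^ d - 1 ∣ D := fun d h1 h2 =>
    pow_sub_one_dvd_Dm_s8 hp.two_le h1 h2
  obtain ⟨gq, hgq⟩ := charpoly_dvd M' hdet hDd
    (fun g hgi hgm hgX hdd => irred_dvd_X_pow_sub_one hgi hgm hgX hdd)
  have hnil : (M' ^ D - 1) ^ m = 0 := by
    have h0 := Matrix.aeval_self_charpoly M'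
    have h1 := congrArg (Polynomial.aeval M') hgq
    simp only [map_pow, map_sub, _root_.map_one, _root_.map_mul, Polynomial.aeval_X, h0,
      zero_mul] at h1
    exact h1
  have hcm : m ≤ p ^ c := Nat.le_pow_clog hp.one_lt m
  have hMD : M' ^ (D * p ^ c) = 1 := by
    have h2 := unipotent_pow_s8 (M' ^ D - 1) hnil hcm
    rw [add_sub_cancel] at h2
    rw [pow_mul]
    exact h2
  set XX : Matrix (Fin m) (Fin m) R := M ^ (D * p ^ c) with hXX
  have hXmap : (RingHom.mapMatrix π) XX = 1 := by
    rw [hXX, map_pow]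
    exact hMD
  have hentry : ∀ i j, ∃ y : R, (XX - 1) i j = (p : R) * y := by
    intro i j
    have hz : π ((XX - 1) i j) = 0 := by
      have h3 : (RingHom.mapMatrix π) (XX - 1) = 0 := by
        rw [map_sub, hXmap, _root_.map_one, sub_self]
      have h4 : ((XX - 1).map π) i j = (0 : Matrix (Fin m) (Fin m) (ZMod p)) i j := by
        rw [show (XX - 1).map π = (RingHom.mapMatrix π) (XX - 1) from rfl, h3]
      simpa [Matrix.map_apply] using h4
    set x : R := (XX - 1) i j with hx
    have hval : ((x.val : ℕ) : ZMod p) = 0 := by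
      rw [show ((x.val : ℕ) : ZMod p) = π ((x.val : ℕ) : R) from (map_natCast π x.val).symm,
        ZMod.natCast_zmod_val, hz]
    have hdvd : p ∣ x.val := (ZMod.natCast_eq_zero_iff _ _).1 hval
    obtain ⟨t, ht⟩ := hdvd
    exact ⟨(t : R), by rw [← ZMod.natCast_zmod_val x, ht]; push_cast; ring⟩
  choose Y hY using hentry
  have hX1 : XX = 1 + (p : R) • Matrix.of Y := by
    ext i j
    have h5 := hY i j
    simp only [Matrix.sub_apply] at h5
    simp only [Matrix.add_apply, Matrix.smul_apply, Matrix.of_apply, smul_eq_mul]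
    linear_combination h5
  have hpe : (p : R) ^ e = 0 := by
    rw [show ((p : R)) ^ e = ((p ^ e : ℕ) : R) from by push_cast; ring, ZMod.natCast_self]
  have hfinal : XX ^ (p ^ (e - 1)) = 1 := by
    rw [hX1]
    exact matrix_lift he hpe (Matrix.of Y)
  apply Units.ext
  rw [Units.val_pow_eq_pow_val, Units.val_one]
  show M ^ (p ^ (e - 1) * p ^ c * D) = 1
  rw [show p ^ (e - 1) * p ^ c * D = D * p ^ c * p ^ (e - 1) from by ring, pow_mul]
  exact hfinal

-- gluing lemma
lemma zmod_glue {n : ℕ} (hn : 2 ≤ n) (z : ZMod n)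
    (hz : ∀ p ∈ n.primeFactors,
      ZMod.castHom (Nat.ordProj_dvd n p) (ZMod (p ^ n.factorization p)) z = 0) : z = 0 := by
  haveI : NeZero n := ⟨by omega⟩
  have hn0 : n ≠ 0 := by omega
  have hdvd : n ∣ z.val := by
    rw [Nat.dvd_iff_prime_pow_dvd_dvd]
    intro p k hp hpk
    have hp' : p.Prime := hp
    have hk : k ≤ n.factorization p := (Nat.Prime.pow_dvd_iff_le_factorization hp hn0).1 hpk
    rcases Nat.eq_zero_or_pos k with hk0 | hk0
    · simp [hk0]
    have hpmem : p ∈ n.primeFactors := by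
      rw [Nat.mem_primeFactors]
      exact ⟨hp', dvd_trans (dvd_pow_self p (by omega)) hpk, hn0⟩
    have hz0 := hz p hpmem
    haveI : NeZero (p ^ n.factorization p) :=
      ⟨pow_ne_zero _ hp'.pos.ne'⟩
    have hval : ((z.val : ℕ) : ZMod (p ^ n.factorization p)) = 0 := by
      rw [show ((z.val : ℕ) : ZMod (p ^ n.factorization p)) =
        ZMod.castHom (Nat.ordProj_dvd n p) (ZMod (p ^ n.factorization p)) ((z.val : ℕ) : ZMod n)
        from (map_natCast _ z.val).symm, ZMod.natCast_zmod_val, hz0]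
    have h2 : p ^ n.factorization p ∣ z.val :=
      (ZMod.natCast_eq_zero_iff _ _).1 hval
    exact dvd_trans (pow_dvd_pow p hk) h2
  rw [← ZMod.natCast_zmod_val z, (ZMod.natCast_eq_zero_iff _ _).2 hdvd]

theorem stmt8 (m : ℕ) (hm : 2 ≤ m) (n : ℕ) (hn : 2 ≤ n) (hnp : ¬ n.Prime)
    (h : ∀ p : ℕ, p.Prime → p ∣ n → Dm m p ∣ Km m n) :
    ∀ A : GL (Fin m) (ZMod n), A ^ Km m n = 1 := by
  intro A
  have hn0 : n ≠ 0 := by omega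
  set K := Km m n with hK
  apply Units.ext
  rw [Units.val_pow_eq_pow_val, Units.val_one]
  set MA : Matrix (Fin m) (Fin m) (ZMod n) := (A : Matrix (Fin m) (Fin m) (ZMod n)) with hMA
  have key : ∀ p ∈ n.primeFactors,
      (RingHom.mapMatrix (ZMod.castHom (Nat.ordProj_dvd n p)
        (ZMod (p ^ n.factorization p)))) (MA ^ K - 1) = 0 := by
    intro p hp
    have hpp : p.Prime := Nat.prime_of_mem_primeFactors hp
    haveI : Fact p.Prime := ⟨hpp⟩
    have hpdvd : p ∣ n := Nat.dvd_of_mem_primeFactors hp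
    set e := n.factorization p with he'
    have he : 1 ≤ e := (Nat.Prime.factorization_pos_of_dvd hpp hn0 hpdvd)
    set φ := ZMod.castHom (Nat.ordProj_dvd n p) (ZMod (p ^ e)) with hφ
    set B : GL (Fin m) (ZMod (p ^ e)) :=
      Units.map (RingHom.mapMatrix φ).toMonoidHom A with hB
    -- Kp divides K
    set c := Nat.clog p m with hc
    have hc1 : 1 ≤ c := Nat.clog_pos hpp.one_lt (by omega)
    set Kp := p ^ (e - 1) * p ^ c * Dm m p with hKp
    have hKpdvd : Kp ∣ K := by
      have h1 : p ^ (e - 1) * p ^ c = p ^ e * p ^ (c - 1) := by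
        rw [← pow_add, ← pow_add]
        congr 1
        omega
      have h2 : p ^ e * p ^ (c - 1) ∣ n * nablam m n := by
        apply mul_dvd_mul (Nat.ordProj_dvd n p)
        exact Finset.dvd_prod_of_mem _ hp
      have h3 : p ^ (e - 1) * p ^ c ∣ K := by
        rw [h1, hK, Km]
        exact dvd_mul_of_dvd_left h2 _
      have h4 : Dm m p ∣ K := h p hpp hpdvd
      have hcop : Nat.Coprime (p ^ (e - 1) * p ^ c) (Dm m p) := by
        rw [← pow_add]
        exact Nat.Coprime.pow_left _ ((Nat.Prime.coprime_iff_not_dvd hpp).2 (not_dvd_Dm' hpp))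
      exact Nat.Coprime.mul_dvd_of_dvd_of_dvd hcop h3 h4
    have hBK : B ^ K = 1 := by
      obtain ⟨t, ht⟩ := hKpdvd
      rw [ht, pow_mul, prime_pow_step he hm B, one_pow]
    have hBval : (B : Matrix (Fin m) (Fin m) (ZMod (p ^ e))) = MA.map φ := rfl
    have hmat : (MA.map φ) ^ K = 1 := by
      have := congrArg (Units.val) hBK
      rw [Units.val_pow_eq_pow_val, Units.val_one, hBval] at this
      exact this
    rw [map_sub, map_pow, _root_.map_one]
    rw [show (RingHom.mapMatrix φ) MA = MA.map φ from rfl, hmat, sub_self]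
  have hsub : MA ^ K - 1 = 0 := by
    ext i j
    have hzero : ∀ p ∈ n.primeFactors,
        ZMod.castHom (Nat.ordProj_dvd n p) (ZMod (p ^ n.factorization p))
          ((MA ^ K - 1) i j) = 0 := by
      intro p hp
      have := key p hp
      have h5 : ((MA ^ K - 1).map (ZMod.castHom (Nat.ordProj_dvd n p)
          (ZMod (p ^ n.factorization p)))) i j = (0 : Matrix (Fin m) (Fin m) _) i j := by
        rw [show (MA ^ K - 1).map (ZMod.castHom (Nat.ordProj_dvd n p)
          (ZMod (p ^ n.factorization p))) = (RingHom.mapMatrix (ZMod.castHom (Nat.ordProj_dvd n p)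
          (ZMod (p ^ n.factorization p)))) (MA ^ K - 1) from rfl, this]
      simpa [Matrix.map_apply] using h5
    have := zmod_glue hn _ hzero
    simpa using this
  have := sub_eq_zero.1 hsub
  exact this
end

section
/- Let m ≥ 2 and let n be a composite natural number. If there is a prime p dividing n such that D_m(p) does not divide K_m(n), then there exists A ∈ GL(m, ℤ/nℤ) with A^(K_m(n)) ≠ I; hence n is not m-Carmichael. -/
open Finset Matrix

section Aux

open Polynomial

/-- `Φ_j(p)` as a natural number. -/
noncomputable def cEval (p j : ℕ) : ℕ := ((Polynomial.cyclotomic j ℤ).eval (p : ℤ)).toNat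

lemma cEval_pos {p : ℕ} (hp : 2 ≤ p) (j : ℕ) : 0 < cEval p j := by
  have h1 : (1 : ℤ) < (p : ℤ) := by exact_mod_cast hp
  have h0 := Polynomial.cyclotomic_pos' j h1
  unfold cEval
  omega

lemma cEval_cast {p : ℕ} (hp : 2 ≤ p) (j : ℕ) :
    ((cEval p j : ℕ) : ℤ) = (Polynomial.cyclotomic j ℤ).eval (p : ℤ) := by
  have h1 : (1 : ℤ) < (p : ℤ) := by exact_mod_cast hp
  exact Int.toNat_of_nonneg (Polynomial.cyclotomic_pos' j h1).le

lemma prod_cEval {p : ℕ} (hp : 2 ≤ p) (s : Finset ℕ) :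
    ((∏ j ∈ s, cEval p j : ℕ) : ℤ) = ∏ j ∈ s, (Polynomial.cyclotomic j ℤ).eval (p : ℤ) := by
  push_cast
  exact Finset.prod_congr rfl fun j _ => cEval_cast hp j

lemma Dm_eq_prod {p : ℕ} (hp : 2 ≤ p) (m : ℕ) : Dm m p = ∏ j ∈ Finset.Icc 1 m, cEval p j := by
  unfold Dm
  rw [← prod_cEval hp, Int.toNat_natCast]

lemma Dm_pos {p : ℕ} (hp : 2 ≤ p) (m : ℕ) : 0 < Dm m p := by
  rw [Dm_eq_prod hp]
  exact Finset.prod_pos fun j _ => cEval_pos hp j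

lemma prod_cEval_dvd {p : ℕ} (hp : 2 ≤ p) {N : ℕ} (hN : 0 < N) {s : Finset ℕ}
    (hs : s ⊆ N.divisors) : (∏ j ∈ s, cEval p j) ∣ p ^ N - 1 := by
  have h0 : ∏ i ∈ N.divisors, (Polynomial.cyclotomic i ℤ).eval (p : ℤ) = (p : ℤ) ^ N - 1 := by
    rw [← Polynomial.eval_prod, Polynomial.prod_cyclotomic_eq_X_pow_sub_one hN]
    simp
  have h1 : (∏ j ∈ s, (Polynomial.cyclotomic j ℤ).eval (p : ℤ)) ∣ (p : ℤ) ^ N - 1 := by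
    rw [← h0]
    exact Finset.prod_dvd_prod_of_subset s _ _ hs
  have hple : 1 ≤ p ^ N := Nat.one_le_pow _ _ (by omega)
  have h2 : ((p ^ N - 1 : ℕ) : ℤ) = (p : ℤ) ^ N - 1 := by
    push_cast [hple]
    ring
  rw [← prod_cEval hp, ← h2] at h1
  exact_mod_cast h1

lemma cEval_root_order {p q j : ℕ} (hp : 2 ≤ p) (hq : q.Prime) (hj : 0 < j) (hqp : ¬ q ∣ p)
    (hdvd : q ∣ cEval p j) :
    j = q ^ (j.factorization q) * orderOf ((p : ℕ) : ZMod q) := by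
  haveI := Fact.mk hq
  -- p is a root of cyclotomic j over ZMod q
  have hroot : (Polynomial.cyclotomic j (ZMod q)).IsRoot ((p : ℕ) : ZMod q) := by
    have : (((p : ℕ) : ℤ) : ZMod q) = ((p : ℕ) : ZMod q) := by push_cast; ring
    rw [Polynomial.IsRoot.def, ← map_cyclotomic_int j (ZMod q), ← this,
      show (((p : ℕ) : ℤ) : ZMod q) = (Int.castRingHom (ZMod q)) ((p : ℕ) : ℤ) from rfl,
      Polynomial.eval_map, Polynomial.eval₂_hom]
    have : (((cEval p j : ℕ) : ℤ) : ZMod q) = 0 := by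
      rw [Int.cast_natCast]
      exact (ZMod.natCast_eq_zero_iff _ _).2 hdvd
    rw [cEval_cast hp j] at this
    exact this
  set k := j.factorization q with hk
  set u := j / q ^ k with hu
  have hju : q ^ k * u = j := Nat.ordProj_mul_ordCompl_eq_self j q
  have hqu : ¬ q ∣ u := Nat.not_dvd_ordCompl hq hj.ne'
  haveI : NeZero ((u : ℕ) : ZMod q) :=
    ⟨fun h => hqu ((ZMod.natCast_eq_zero_iff u q).1 h)⟩
  rw [← hju] at hroot
  have hprim : IsPrimitiveRoot ((p : ℕ) : ZMod q) u :=
    (Polynomial.isRoot_cyclotomic_prime_pow_mul_iff_of_charP).1 hroot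
  rw [← hju, hprim.eq_orderOf]

lemma partA {p q m : ℕ} (hp : 2 ≤ p) (hq : q.Prime) (hm : 1 ≤ m) :
    ∃ j, 1 ≤ j ∧ j ≤ m ∧ (Dm m p).factorization q ≤ (p ^ j - 1).factorization q := by
  classical
  have hc : ∀ j, cEval p j ≠ 0 := fun j => (cEval_pos hp j).ne'
  have hDm : (Dm m p).factorization q
      = ∑ j ∈ Finset.Icc 1 m, (cEval p j).factorization q := by
    rw [Dm_eq_prod hp, Nat.factorization_prod (fun j _ => hc j)]
    simp
  by_cases hS : ∀ j ∈ Finset.Icc 1 m, ¬ q ∣ cEval p j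
  · refine ⟨1, le_refl 1, hm, ?_⟩
    rw [hDm, Finset.sum_eq_zero fun j hj => Nat.factorization_eq_zero_of_not_dvd (hS j hj)]
    exact Nat.zero_le _
  push_neg at hS
  obtain ⟨j0, hj0m, hj0⟩ := hS
  have hj0pos : 0 < j0 := by
    have := (Finset.mem_Icc.1 hj0m).1; omega
  have hqp : ¬ q ∣ p := by
    intro hqp'
    have h1 : cEval p j0 ∣ p ^ j0 - 1 := by
      have := prod_cEval_dvd hp hj0pos (s := {j0})
        (by intro x hx; simp at hx; subst hx; exact Nat.mem_divisors.2 ⟨dvd_rfl, hj0pos.ne'⟩)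
      simpa using this
    have hq1 : q ∣ p ^ j0 - 1 := hq.dvd_of_dvd_pow (n := 1) (by simpa using hj0.trans h1)
    have hq2 : q ∣ p ^ j0 := dvd_pow hqp' hj0pos.ne'
    have hple : 1 ≤ p ^ j0 := Nat.one_le_pow _ _ (by omega)
    have h3 : q ∣ 1 := by
      have := Nat.dvd_sub hq2 hq1
      rwa [Nat.sub_sub_self hple] at this
    have := Nat.le_of_dvd one_pos h3
    have := hq.two_le
    omega
  set e := orderOf ((p : ℕ) : ZMod q) with he
  have hroot : ∀ j ∈ Finset.Icc 1 m, q ∣ cEval p j → j = q ^ (j.factorization q) * e :=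
    fun j hj hd => cEval_root_order hp hq (by have := (Finset.mem_Icc.1 hj).1; omega) hqp hd
  have hj0e := hroot j0 hj0m hj0
  have he1 : 1 ≤ e := by
    rcases Nat.eq_zero_or_pos e with h0 | h1
    · rw [h0, mul_zero] at hj0e; omega
    · exact h1
  set S := (Finset.Icc 1 m).filter (fun j => q ∣ cEval p j) with hSdef
  have hSne : j0 ∈ S := Finset.mem_filter.2 ⟨hj0m, hj0⟩
  set s := S.sup (fun j => j.factorization q) with hs
  set J := q ^ s * e with hJdef
  obtain ⟨j1, hj1S, hj1⟩ := Finset.exists_mem_eq_sup S ⟨j0, hSne⟩ (fun j => j.factorization q)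
  have hJm : J ≤ m := by
    have h1 := hroot j1 (Finset.mem_filter.1 hj1S).1 (Finset.mem_filter.1 hj1S).2
    have h2 := (Finset.mem_Icc.1 (Finset.mem_filter.1 hj1S).1).2
    rw [hJdef, hs, hj1, ← h1]
    exact h2
  have hJ1 : 1 ≤ J := Nat.mul_pos (pow_pos hq.pos _) he1
  refine ⟨J, hJ1, hJm, ?_⟩
  rw [hDm]
  have hsum1 : ∑ j ∈ Finset.Icc 1 m, (cEval p j).factorization q
      = ∑ j ∈ S, (cEval p j).factorization q := by
    rw [hSdef]
    exact (Finset.sum_filter_of_ne fun j _ hne => by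
      by_contra hq'
      exact hne (Nat.factorization_eq_zero_of_not_dvd hq')).symm
  have hinj : ∀ t1 ∈ Finset.range (s + 1), ∀ t2 ∈ Finset.range (s + 1),
      q ^ t1 * e = q ^ t2 * e → t1 = t2 := by
    intro t1 _ t2 _ hteq
    have : q ^ t1 = q ^ t2 := Nat.eq_of_mul_eq_mul_right he1 hteq
    exact Nat.pow_right_injective hq.two_le this
  have hsub : S ⊆ (Finset.range (s + 1)).image (fun t => q ^ t * e) := by
    intro j hj
    have hmem := Finset.mem_filter.1 hj
    have h1 := hroot j hmem.1 hmem.2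
    exact Finset.mem_image.2 ⟨j.factorization q,
      Finset.mem_range.2 (Nat.lt_succ_of_le (Finset.le_sup (f := fun j => j.factorization q) hj)),
      h1.symm⟩
  have hsum2 : ∑ j ∈ S, (cEval p j).factorization q
      ≤ ∑ t ∈ Finset.range (s + 1), (cEval p (q ^ t * e)).factorization q := by
    calc ∑ j ∈ S, (cEval p j).factorization q
        ≤ ∑ j ∈ (Finset.range (s + 1)).image (fun t => q ^ t * e),
            (cEval p j).factorization q :=
          Finset.sum_le_sum_of_subset hsub
      _ = _ := Finset.sum_image hinj
  have hdvd : (∏ t ∈ Finset.range (s + 1), cEval p (q ^ t * e)) ∣ p ^ J - 1 := by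
    have himg : ((Finset.range (s + 1)).image (fun t => q ^ t * e)) ⊆ J.divisors := by
      intro d hd
      obtain ⟨t, ht, rfl⟩ := Finset.mem_image.1 hd
      refine Nat.mem_divisors.2 ⟨?_, by omega⟩
      exact mul_dvd_mul (pow_dvd_pow q (Nat.lt_succ_iff.1 (Finset.mem_range.1 ht))) dvd_rfl
    have := prod_cEval_dvd hp (by omega : 0 < J) himg
    rwa [Finset.prod_image hinj] at this
  have hne : p ^ J - 1 ≠ 0 := by
    have : 2 ≤ p ^ J := by
      calc 2 ≤ p := hp
        _ = p ^ 1 := (pow_one p).symm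
        _ ≤ p ^ J := Nat.pow_le_pow_right (by omega) hJ1
    omega
  have hfin : ∑ t ∈ Finset.range (s + 1), (cEval p (q ^ t * e)).factorization q
      ≤ (p ^ J - 1).factorization q := by
    have hprodne : (∏ t ∈ Finset.range (s + 1), cEval p (q ^ t * e)) ≠ 0 :=
      (Finset.prod_pos fun t _ => cEval_pos hp _).ne'
    have hle := (Nat.factorization_le_iff_dvd hprodne hne).2 hdvd
    have heq : (∏ t ∈ Finset.range (s + 1), cEval p (q ^ t * e)).factorization q
        = ∑ t ∈ Finset.range (s + 1), (cEval p (q ^ t * e)).factorization q := by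
      rw [Nat.factorization_prod (fun t _ => (cEval_pos hp _).ne')]
      simp
    rw [← heq]
    exact hle q
  omega

lemma partB {p q a j m : ℕ} (hp : p.Prime) (hj : 1 ≤ j) (hjm : j ≤ m)
    (hdvd : q ^ a ∣ p ^ j - 1) :
    ∃ A : (Matrix (Fin m) (Fin m) (ZMod p))ˣ, orderOf A = q ^ a := by
  haveI := Fact.mk hp
  set F := GaloisField p j with hF
  have hcard : Nat.card Fˣ = p ^ j - 1 := by
    rw [Nat.card_units, GaloisField.card p j (by omega)]
  obtain ⟨g, hg⟩ := IsCyclic.exists_generator (α := Fˣ)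
  have hog : orderOf g = p ^ j - 1 := by
    rw [orderOf_eq_card_of_forall_mem_zpowers hg, hcard]
  have hpj2 : 2 ≤ p ^ j := by
    calc 2 ≤ p := hp.two_le
      _ = p ^ 1 := (pow_one p).symm
      _ ≤ p ^ j := Nat.pow_le_pow_right hp.pos hj
  obtain ⟨r, hr⟩ := hdvd
  have hr0 : r ≠ 0 := by
    intro h0; rw [h0, mul_zero] at hr; omega
  have hx : orderOf (g ^ r) = q ^ a := by
    rw [orderOf_pow, hog, hr, Nat.gcd_eq_right ⟨q ^ a, mul_comm _ _⟩,
      Nat.mul_div_cancel _ (Nat.pos_of_ne_zero hr0)]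
  -- build the algebra V of dimension m over ZMod p
  set V := F × (Fin (m - j) → ZMod p) with hV
  have hrank : Module.finrank (ZMod p) V = m := by
    show Module.finrank (ZMod p) (F × (Fin (m - j) → ZMod p)) = m
    rw [Module.finrank_prod, GaloisField.finrank p (by omega : j ≠ 0), Module.finrank_pi,
      Fintype.card_fin]
    omega
  let b : Module.Basis (Fin m) (ZMod p) V := Module.finBasisOfFinrankEq _ _ hrank
  let Θ₀ : V →ₐ[ZMod p] Matrix (Fin m) (Fin m) (ZMod p) := Algebra.leftMulMatrix b
  let ι : F →* V :=
    { toFun := fun y => (y, 1)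
      map_one' := rfl
      map_mul' := fun y z => by rw [Prod.mk_mul_mk, one_mul] }
  have hιinj : Function.Injective ι := fun y z hyz => (Prod.ext_iff.1 hyz).1
  let Θ : F →* Matrix (Fin m) (Fin m) (ZMod p) := (Θ₀ : V →* _).comp ι
  have hΘinj : Function.Injective Θ :=
    fun y z hyz => hιinj (Algebra.leftMulMatrix_injective b hyz)
  let Ψ : Fˣ →* (Matrix (Fin m) (Fin m) (ZMod p))ˣ := Units.map Θ
  have hΨinj : Function.Injective Ψ := fun u v huv =>
    Units.ext (hΘinj (congrArg Units.val huv))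
  exact ⟨Ψ (g ^ r), by rw [orderOf_injective Ψ hΨinj, hx]⟩

lemma partC {m n p : ℕ} (hn : 2 ≤ n) (hp : p.Prime) (hpn : p ∣ n)
    (A₀ : (Matrix (Fin m) (Fin m) (ZMod p))ˣ) :
    ∃ A : (Matrix (Fin m) (Fin m) (ZMod n))ˣ, ∀ K : ℕ, A ^ K = 1 → A₀ ^ K = 1 := by
  classical
  haveI := Fact.mk hp
  have hn0 : n ≠ 0 := by omega
  haveI : NeZero n := ⟨hn0⟩
  set v := n.factorization p with hv
  have hv1 : 1 ≤ v := hp.factorization_pos_of_dvd hn0 hpn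
  set N₁ : ℕ := p ^ v with hN₁
  set N₂ : ℕ := n / N₁ with hN₂
  have hsplit : N₁ * N₂ = n := Nat.ordProj_mul_ordCompl_eq_self n p
  have hco : N₁.Coprime N₂ := Nat.Coprime.pow_left _ (Nat.coprime_ordCompl hp hn0)
  have hN₁dvd : N₁ ∣ n := Nat.ordProj_dvd n p
  have hN₂dvd : N₂ ∣ n := Nat.ordCompl_dvd n p
  have hN₁pos : 0 < N₁ := pow_pos hp.pos v
  have hN₂pos : 0 < N₂ := Nat.ordCompl_pos p hn0
  haveI : NeZero N₁ := ⟨hN₁pos.ne'⟩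
  haveI : NeZero N₂ := ⟨hN₂pos.ne'⟩
  have hpN₁ : p ∣ N₁ := dvd_pow_self p (by omega)
  let f₁ : ZMod n →+* ZMod N₁ := ZMod.castHom hN₁dvd _
  let f₂ : ZMod n →+* ZMod N₂ := ZMod.castHom hN₂dvd _
  let Φ : ZMod n →+* ZMod N₁ × ZMod N₂ := f₁.prod f₂
  have hval₁ : ∀ x : ZMod n, f₁ x = ((x.val : ℕ) : ZMod N₁) := fun x => by
    rw [ZMod.castHom_apply, ← ZMod.natCast_val]
  have hval₂ : ∀ x : ZMod n, f₂ x = ((x.val : ℕ) : ZMod N₂) := fun x => by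
    rw [ZMod.castHom_apply, ← ZMod.natCast_val]
  have hΦinj : Function.Injective Φ := by
    rw [injective_iff_map_eq_zero]
    intro x hx
    have h1 : f₁ x = 0 := congrArg Prod.fst hx
    have h2 : f₂ x = 0 := congrArg Prod.snd hx
    rw [hval₁] at h1; rw [hval₂] at h2
    have d1 : N₁ ∣ x.val := (ZMod.natCast_eq_zero_iff _ _).1 h1
    have d2 : N₂ ∣ x.val := (ZMod.natCast_eq_zero_iff _ _).1 h2
    have dn : n ∣ x.val := by
      have h' : N₁ * N₂ ∣ x.val := hco.mul_dvd_of_dvd_of_dvd d1 d2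
      rwa [hsplit] at h'
    have := ZMod.val_lt x
    have : x.val = 0 := by
      rcases dn with ⟨c, hc⟩
      rcases Nat.eq_zero_or_pos c with rfl | hcpos
      · omega
      · nlinarith
    exact (ZMod.val_eq_zero x).1 this
  have hΦbij : Function.Bijective Φ := by
    rw [Fintype.bijective_iff_injective_and_card]
    refine ⟨hΦinj, ?_⟩
    rw [Fintype.card_prod, ZMod.card, ZMod.card, ZMod.card, hsplit]
  let E : ZMod n ≃+* ZMod N₁ × ZMod N₂ := RingEquiv.ofBijective Φ hΦbij
  have hE : ∀ x, E x = (f₁ x, f₂ x) := fun x => rfl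
  -- the lift of A₀ to ZMod N₁
  let B : Matrix (Fin m) (Fin m) (ZMod N₁) :=
    fun i k => (((A₀ : Matrix (Fin m) (Fin m) (ZMod p)) i k).val : ZMod N₁)
  let A : Matrix (Fin m) (Fin m) (ZMod n) :=
    fun i k => E.symm (B i k, (1 : Matrix (Fin m) (Fin m) (ZMod N₂)) i k)
  have hA1 : A.map f₁ = B := by
    ext i k
    have := congrArg Prod.fst (E.apply_symm_apply (B i k, (1 : Matrix (Fin m) (Fin m) (ZMod N₂)) i k))
    rw [hE] at this
    exact this
  have hA2 : A.map f₂ = 1 := by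
    ext i k
    have := congrArg Prod.snd (E.apply_symm_apply (B i k, (1 : Matrix (Fin m) (Fin m) (ZMod N₂)) i k))
    rw [hE] at this
    exact this
  let g : ZMod N₁ →+* ZMod p := ZMod.castHom hpN₁ _
  have hBg : B.map g = (A₀ : Matrix (Fin m) (Fin m) (ZMod p)) := by
    ext i k
    show g (((((A₀ : Matrix (Fin m) (Fin m) (ZMod p)) i k).val : ℕ)) : ZMod N₁) = _
    rw [map_natCast, ZMod.natCast_val, ZMod.cast_id]
  have hdetA₀ : IsUnit ((A₀ : Matrix (Fin m) (Fin m) (ZMod p)).det) :=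
    (Matrix.isUnit_iff_isUnit_det _).1 A₀.isUnit
  have hdetB : IsUnit B.det := by
    have hgd : g B.det = (A₀ : Matrix (Fin m) (Fin m) (ZMod p)).det := by
      rw [RingHom.map_det, RingHom.mapMatrix_apply, hBg]
    have hne : ((B.det.val : ℕ) : ZMod p) ≠ 0 := by
      have : g B.det = ((B.det.val : ℕ) : ZMod p) := by
        rw [ZMod.castHom_apply, ← ZMod.natCast_val]
      rw [← this, hgd]
      exact hdetA₀.ne_zero
    have hndvd : ¬ p ∣ B.det.val := fun hd => hne ((ZMod.natCast_eq_zero_iff _ _).2 hd)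
    have hcop : (B.det.val).Coprime N₁ :=
      Nat.Coprime.pow_right _ ((Nat.Prime.coprime_iff_not_dvd hp).2 hndvd).symm
    have := (ZMod.isUnit_iff_coprime B.det.val N₁).2 hcop
    rwa [ZMod.natCast_val, ZMod.cast_id] at this
  have hdetA : IsUnit A.det := by
    have hEdet : E A.det = (B.det, 1) := by
      rw [hE]
      have h1 : f₁ A.det = B.det := by
        rw [RingHom.map_det, RingHom.mapMatrix_apply, hA1]
      have h2 : f₂ A.det = 1 := by
        rw [RingHom.map_det, RingHom.mapMatrix_apply, hA2, Matrix.det_one]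
      rw [h1, h2]
    have hu : IsUnit (E A.det) := by
      rw [hEdet]
      obtain ⟨u, hu⟩ := hdetB
      exact ⟨MulEquiv.prodUnits.symm (u, 1), by simp [← hu]; rfl⟩
    have := hu.map E.symm
    rwa [RingEquiv.symm_apply_apply] at this
  have hAunit : IsUnit A := (Matrix.isUnit_iff_isUnit_det A).2 hdetA
  refine ⟨hAunit.unit, fun K hK => ?_⟩
  -- reduce mod p
  let f : ZMod n →+* ZMod p := ZMod.castHom hpn _
  have hfgf : ∀ x : ZMod n, f x = g (f₁ x) := by
    intro x
    have := ZMod.castHom_comp hpN₁ hN₁dvd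
    calc f x = (ZMod.castHom (dvd_trans hpN₁ hN₁dvd) (ZMod p)) x := rfl
      _ = ((ZMod.castHom hpN₁ (ZMod p)).comp (ZMod.castHom hN₁dvd (ZMod N₁))) x := by rw [this]
      _ = g (f₁ x) := rfl
  have hAf : A.map f = (A₀ : Matrix (Fin m) (Fin m) (ZMod p)) := by
    have : A.map f = (A.map f₁).map g := by
      ext i k
      simp [Matrix.map_apply, hfgf]
    rw [this, hA1, hBg]
  let Ψ : (Matrix (Fin m) (Fin m) (ZMod n))ˣ →* (Matrix (Fin m) (Fin m) (ZMod p))ˣ :=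
    Units.map (f.mapMatrix : Matrix (Fin m) (Fin m) (ZMod n) →+* _).toMonoidHom
  have hΨA : Ψ hAunit.unit = A₀ := by
    apply Units.ext
    show f.mapMatrix (hAunit.unit : Matrix (Fin m) (Fin m) (ZMod n)) = _
    rw [IsUnit.unit_spec, RingHom.mapMatrix_apply, hAf]
  calc A₀ ^ K = (Ψ hAunit.unit) ^ K := by rw [hΨA]
    _ = Ψ (hAunit.unit ^ K) := (map_pow Ψ _ _).symm
    _ = Ψ 1 := by rw [hK]
    _ = 1 := map_one Ψ

end Aux

theorem stmt9 (m : ℕ) (hm : 2 ≤ m) (n : ℕ) (hn : 2 ≤ n) (hnp : ¬ n.Prime)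
    (p : ℕ) (hp : p.Prime) (hpn : p ∣ n) (h : ¬ Dm m p ∣ Km m n) :
    ∃ A : GL (Fin m) (ZMod n), A ^ Km m n ≠ 1 := by
  classical
  have hp2 : 2 ≤ p := hp.two_le
  have hm1 : 1 ≤ m := by omega
  -- Km m n ≠ 0
  have hnab : 0 < nablam m n := Finset.prod_pos fun r hr =>
    pow_pos (Nat.prime_of_mem_primeFactors hr).pos _
  have hK0 : Km m n ≠ 0 := by
    have := Dm_pos hn m
    unfold Km
    positivity
  have hD0 : Dm m p ≠ 0 := (Dm_pos hp2 m).ne'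
  -- find a prime q with more q-adic valuation in Dm m p than in Km m n
  have hqex : ∃ q, q.Prime ∧ (Km m n).factorization q < (Dm m p).factorization q := by
    by_contra hcon
    push_neg at hcon
    apply h
    rw [← Nat.factorization_le_iff_dvd hD0 hK0]
    intro q
    by_cases hq : q.Prime
    · exact hcon q hq
    · rw [Nat.factorization_eq_zero_of_not_prime _ hq]
      exact Nat.zero_le _
  obtain ⟨q, hq, hqlt⟩ := hqex
  obtain ⟨j, hj1, hjm, hjle⟩ := partA hp2 hq hm1
  set a := (Km m n).factorization q + 1 with ha
  have hpj2 : 2 ≤ p ^ j := by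
    calc 2 ≤ p := hp2
      _ = p ^ 1 := (pow_one p).symm
      _ ≤ p ^ j := Nat.pow_le_pow_right (by omega) hj1
  have hqa_dvd : q ^ a ∣ p ^ j - 1 :=
    (hq.pow_dvd_iff_le_factorization (by omega : p ^ j - 1 ≠ 0)).2 (by omega)
  have hqa_ndvd : ¬ q ^ a ∣ Km m n := fun hd => by
    have := (hq.pow_dvd_iff_le_factorization hK0).1 hd
    omega
  obtain ⟨A₀, hA₀⟩ := partB hp hj1 hjm hqa_dvd
  have hA₀K : A₀ ^ Km m n ≠ 1 := fun h1 => by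
    have := orderOf_dvd_of_pow_eq_one h1
    rw [hA₀] at this
    exact hqa_ndvd this
  obtain ⟨A, hA⟩ := partC hn hp hpn A₀
  exact ⟨A, fun h1 => hA₀K (hA _ h1)⟩
end

section
/- Let m ≥ 2. If n is an m-Carmichael number and k is a positive integer, then n^k is also an m-Carmichael number. -/
open Finset Matrix

open Polynomial in
lemma cycl_prod_dvd_expand (m k : ℕ) (hk : 0 < k) :
    (∏ j ∈ Finset.Icc 1 m, cyclotomic j ℤ) ∣
      Polynomial.expand ℤ k (∏ j ∈ Finset.Icc 1 m, cyclotomic j ℤ) := by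
  have hmonic1 : (∏ j ∈ Finset.Icc 1 m, cyclotomic j ℤ).Monic :=
    monic_prod_of_monic _ _ fun j _ => cyclotomic.monic j ℤ
  have hmonic2 : (Polynomial.expand ℤ k (∏ j ∈ Finset.Icc 1 m, cyclotomic j ℤ)).Monic :=
    hmonic1.expand hk
  apply hmonic2.dvd_of_fraction_map_dvd_fraction_map (K := ℚ) hmonic1
  simp only [Polynomial.map_expand, Polynomial.map_prod, map_cyclotomic]
  apply Finset.prod_dvd_of_coprime
  · intro a _ b _ hab
    exact cyclotomic.isCoprime_rat hab
  · intro j hj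
    obtain ⟨hj1, hj2⟩ := Finset.mem_Icc.mp hj
    have hj0 : (j : ℕ) ≠ 0 := by omega
    have hζ : IsPrimitiveRoot (Complex.exp (2 * Real.pi * Complex.I / j)) j :=
      Complex.isPrimitiveRoot_exp j hj0
    set ζ : ℂ := Complex.exp (2 * Real.pi * Complex.I / j)
    rw [cyclotomic_eq_minpoly_rat hζ (by omega)]
    apply minpoly.dvd
    rw [Polynomial.expand_aeval, map_prod]
    have hgpos : 0 < Nat.gcd j k := Nat.gcd_pos_of_pos_left k (by omega)
    have hipos : 0 < j / Nat.gcd j k :=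
      Nat.div_pos (Nat.le_of_dvd (by omega) (Nat.gcd_dvd_left j k)) hgpos
    apply Finset.prod_eq_zero (i := j / Nat.gcd j k)
    · exact Finset.mem_Icc.mpr ⟨hipos, le_trans (Nat.div_le_self _ _) hj2⟩
    · have horder : orderOf ζ = j := hζ.eq_orderOf.symm
      have h2 : orderOf (ζ ^ k) = j / Nat.gcd j k := by
        rw [orderOf_pow' _ hk.ne', horder]
      have hprim2 : IsPrimitiveRoot (ζ ^ k) (j / Nat.gcd j k) :=
        h2 ▸ IsPrimitiveRoot.orderOf (ζ ^ k)
      have hroot := hprim2.isRoot_cyclotomic hipos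
      rw [Polynomial.IsRoot.def] at hroot
      rw [Polynomial.aeval_def, Polynomial.eval₂_eq_eval_map, map_cyclotomic]
      exact hroot

lemma Dm_dvd_Dm_pow (m n k : ℕ) (hn : 2 ≤ n) (hk : 0 < k) : Dm m n ∣ Dm m (n ^ k) := by
  have h := cycl_prod_dvd_expand m k hk
  have heval := Polynomial.eval_dvd (x := (n : ℤ)) h
  rw [Polynomial.expand_eval] at heval
  have hn1 : (1 : ℤ) < (n : ℤ) := by exact_mod_cast hn
  have hn1k : (1 : ℤ) < (n : ℤ) ^ k := one_lt_pow₀ hn1 hk.ne'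
  have hpos1 : 0 < (∏ j ∈ Finset.Icc 1 m, Polynomial.cyclotomic j ℤ).eval (n : ℤ) := by
    rw [Polynomial.eval_prod]
    exact Finset.prod_pos fun j _ => Polynomial.cyclotomic_pos' j hn1
  have hpos2 : 0 < (∏ j ∈ Finset.Icc 1 m, Polynomial.cyclotomic j ℤ).eval ((n : ℤ) ^ k) := by
    rw [Polynomial.eval_prod]
    exact Finset.prod_pos fun j _ => Polynomial.cyclotomic_pos' j hn1k
  unfold Dm
  rw [← Int.natCast_dvd_natCast]
  simp only [Polynomial.eval_prod] at hpos1 hpos2 heval ⊢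
  rw [Int.toNat_of_nonneg hpos1.le, Int.toNat_of_nonneg (by push_cast; exact hpos2.le)]
  push_cast
  exact heval

lemma Km_mul_dvd (m n k : ℕ) (hn : 2 ≤ n) (hk : 0 < k) :
    Km m n * n ^ (k - 1) ∣ Km m (n ^ k) := by
  unfold Km
  have hnab : nablam m (n ^ k) = nablam m n := by
    unfold nablam
    rw [Nat.primeFactors_pow _ hk.ne']
  rw [hnab]
  have hnn : n * n ^ (k - 1) = n ^ k := by
    rw [← pow_succ']
    congr 1
    omega
  have hpow : n * nablam m n * Dm m n * n ^ (k - 1) =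
      n ^ k * nablam m n * Dm m n := by
    calc n * nablam m n * Dm m n * n ^ (k - 1)
        = (n * n ^ (k - 1)) * nablam m n * Dm m n := by ring
      _ = n ^ k * nablam m n * Dm m n := by rw [hnn]
  rw [hpow]
  exact mul_dvd_mul_left _ (Dm_dvd_Dm_pow m n k hn hk)

/-- Key binomial step in a (possibly noncommutative) ring. -/
lemma one_add_pow_step {A : Type*} [Ring A] (n i : ℕ) (hi : 1 ≤ i) (b : A) :
    ∃ c : A, (1 + (n : A) ^ i * b) ^ n = 1 + (n : A) ^ (i + 1) * c := by
  classical
  set X : A := (n : A) ^ i * b with hX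
  have hcomm : Commute X (1 : A) := Commute.one_right X
  have hexp := hcomm.add_pow n
  rw [Finset.sum_range_succ'] at hexp
  simp only [pow_zero, Nat.sub_zero, one_pow, Nat.choose_zero_right, Nat.cast_one, mul_one,
    one_mul] at hexp
  set d : ℕ → A := fun t =>
    if t = 0 then b
    else (n : A) ^ (i * (t + 1) - (i + 1)) * b ^ (t + 1) * (n.choose (t + 1) : A) with hd
  have hstep : ∀ t ∈ Finset.range n,
      X ^ (t + 1) * (n.choose (t + 1) : A) = (n : A) ^ (i + 1) * d t := by
    intro t _
    have hcb : Commute ((n : A) ^ i) b := (Nat.cast_commute n b).pow_left i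
    have hXpow : X ^ (t + 1) = (n : A) ^ (i * (t + 1)) * b ^ (t + 1) := by
      rw [hX, hcb.mul_pow, ← pow_mul]
    rcases Nat.eq_zero_or_pos t with rfl | ht
    · simp only [hd, if_pos rfl]
      rw [hXpow]
      simp only [zero_add, mul_one, pow_one, Nat.choose_one_right]
      rw [mul_assoc, ((Nat.cast_commute n b).symm).eq, ← mul_assoc, ← pow_succ]
    · simp only [hd, if_neg ht.ne']
      rw [hXpow]
      have hge : i + 1 ≤ i * (t + 1) := by nlinarith
      have hsplit : (n : A) ^ (i * (t + 1)) =
          (n : A) ^ (i + 1) * (n : A) ^ (i * (t + 1) - (i + 1)) := by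
        rw [← pow_add]
        congr 1
        omega
      rw [hsplit]
      simp [mul_assoc]
  refine ⟨∑ t ∈ Finset.range n, d t, ?_⟩
  rw [add_comm (1 : A) X, hexp, Finset.sum_congr rfl hstep, ← Finset.mul_sum]
  rw [add_comm]

lemma one_add_pow_lift {A : Type*} [Ring A] (n : ℕ) (b : A) (j : ℕ) :
    ∃ c : A, (1 + (n : A) * b) ^ n ^ j = 1 + (n : A) ^ (j + 1) * c := by
  induction j with
  | zero => exact ⟨b, by simp⟩
  | succ j ih =>
    obtain ⟨c, hc⟩ := ih
    obtain ⟨c', hc'⟩ := one_add_pow_step n (j + 1) (by omega) c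
    exact ⟨c', by rw [pow_succ, pow_mul, hc, hc']⟩

theorem stmt11 (m : ℕ) (hm : 2 ≤ m) (n : ℕ) (h : IsMCarmichael m n)
    (k : ℕ) (hk : 0 < k) : IsMCarmichael m (n ^ k) := by
  obtain ⟨hnp, hn2, hA⟩ := h
  have hnk2 : 2 ≤ n ^ k := Nat.one_lt_pow hk.ne' hn2
  haveI : NeZero (n ^ k) := ⟨by omega⟩
  haveI : NeZero n := ⟨by omega⟩
  refine ⟨?_, hnk2, ?_⟩
  · rcases Nat.lt_or_ge k 2 with h1 | h2
    · interval_cases k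
      simpa using hnp
    · have : n ^ k = n * n ^ (k - 1) := by
        rw [← pow_succ']
        congr 1
        omega
      rw [this]
      exact Nat.not_prime_mul (by omega)
        (Nat.one_lt_pow (by omega) hn2).ne'
  · intro A
    set R := ZMod (n ^ k)
    have hdvd : n ∣ n ^ k := dvd_pow_self n hk.ne'
    set f : Matrix (Fin m) (Fin m) R →+* Matrix (Fin m) (Fin m) (ZMod n) :=
      (ZMod.castHom hdvd (ZMod n)).mapMatrix with hf
    set F : GL (Fin m) (ZMod (n ^ k)) →* GL (Fin m) (ZMod n) :=
      Units.map f.toMonoidHom with hF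
    have h1 : F (A ^ Km m n) = 1 := by
      rw [map_pow]
      exact hA (F A)
    set M : Matrix (Fin m) (Fin m) R := (A ^ Km m n : GL (Fin m) (ZMod (n ^ k))).val with hM
    have h2 : f M = 1 := congrArg Units.val h1
    -- extract B with M = 1 + n * B
    have hB : ∀ i j : Fin m, ∃ y : R,
        M i j = (1 : Matrix (Fin m) (Fin m) R) i j + (n : R) * y := by
      intro i j
      set x : R := M i j - (1 : Matrix (Fin m) (Fin m) R) i j with hx
      have hcx : ZMod.castHom hdvd (ZMod n) x = 0 := by
        have hentry : (f M) i j = (1 : Matrix (Fin m) (Fin m) (ZMod n)) i j := by rw [h2]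
        have hone : ZMod.castHom hdvd (ZMod n) ((1 : Matrix (Fin m) (Fin m) R) i j)
            = (1 : Matrix (Fin m) (Fin m) (ZMod n)) i j := by
          rcases eq_or_ne i j with rfl | hij
          · rw [Matrix.one_apply_eq, Matrix.one_apply_eq, _root_.map_one]
          · rw [Matrix.one_apply_ne hij, Matrix.one_apply_ne hij, _root_.map_zero]
        rw [hx, map_sub, hone]
        rw [hf] at hentry
        simp only [RingHom.mapMatrix_apply, Matrix.map_apply] at hentry
        rw [hentry]
        ring
      have hval : ((x.val : ℕ) : ZMod n) = 0 := by
        rw [ZMod.natCast_val]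
        rwa [ZMod.castHom_apply] at hcx
      obtain ⟨c, hc⟩ := (ZMod.natCast_eq_zero_iff _ _).mp hval
      refine ⟨(c : R), ?_⟩
      have hxx : x = ((x.val : ℕ) : R) := by
        rw [ZMod.natCast_val, ZMod.cast_id]
      have : x = (n : R) * (c : R) := by
        rw [hxx, hc]
        push_cast
        exact Nat.cast_mul (α := ZMod (n ^ k)) _ _
      rw [hx] at this
      linear_combination this
    classical
    set B : Matrix (Fin m) (Fin m) R :=
      Matrix.of fun i j => Classical.choose (hB i j) with hBdef
    have hMeq : M = 1 + (n : Matrix (Fin m) (Fin m) R) * B := by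
      ext i j
      have := Classical.choose_spec (hB i j)
      rw [Matrix.add_apply, ← nsmul_eq_mul, Matrix.smul_apply, nsmul_eq_mul]
      exact this
    obtain ⟨C, hC⟩ := one_add_pow_lift (A := Matrix (Fin m) (Fin m) R) n B (k - 1)
    have hzero : ((n : Matrix (Fin m) (Fin m) R)) ^ (k - 1 + 1) = 0 := by
      have hk1 : k - 1 + 1 = k := by omega
      rw [hk1, ← Nat.cast_pow]
      have : ((n ^ k : ℕ) : R) = 0 := ZMod.natCast_self _
      calc ((n ^ k : ℕ) : Matrix (Fin m) (Fin m) R)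
          = Matrix.scalar (Fin m) ((n ^ k : ℕ) : R) := (map_natCast (Matrix.scalar (Fin m)) _).symm
        _ = 0 := by rw [this, map_zero]
    have hMpow : M ^ n ^ (k - 1) = 1 := by
      rw [hMeq, hC, hzero, zero_mul, add_zero]
    have hu : A ^ (Km m n * n ^ (k - 1)) = 1 := by
      apply Units.ext
      rw [pow_mul, Units.val_pow_eq_pow_val, Units.val_one, ← hM, hMpow]
    obtain ⟨q, hq⟩ := Km_mul_dvd m n k hn2 hk
    rw [hq, pow_mul, hu, one_pow]
end

section
/- Let m ≥ 2. If n is an m-Carmichael number, then n is not congruent to 2 modulo 4. -/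
open Finset Matrix

/-- Embedding a matrix as the top-left block, identity elsewhere: a monoid hom. -/
def blockMulHom (R : Type*) [CommRing R] (a b : Type*) [Fintype a] [Fintype b]
    [DecidableEq a] [DecidableEq b] :
    Matrix a a R →* Matrix (a ⊕ b) (a ⊕ b) R where
  toFun M := Matrix.fromBlocks M 0 0 1
  map_one' := Matrix.fromBlocks_one
  map_mul' M N := by
    rw [Matrix.fromBlocks_multiply]
    congr 1 <;> simp

lemma blockMulHom_injective (R : Type*) [CommRing R] (a b : Type*) [Fintype a] [Fintype b]
    [DecidableEq a] [DecidableEq b] : Function.Injective (blockMulHom R a b) := by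
  intro M N h
  have := congrArg Matrix.toBlocks₁₁ h
  simpa [blockMulHom, Matrix.toBlocks_fromBlocks₁₁] using this

lemma int_two_pow_dvd (p : ℕ) (hp : p % 2 = 1) :
    ∀ k : ℕ, 1 ≤ k → (2 : ℤ) ^ (k + 2) ∣ (p : ℤ) ^ (2 ^ k) - 1 := by
  intro k hk
  induction k with
  | zero => omega
  | succ k ih =>
    rcases Nat.eq_or_lt_of_le hk with h1 | h1
    · -- k + 1 = 1, i.e. k = 0 : show 8 ∣ p^2 - 1
      have hk0 : k = 0 := by omega
      subst hk0
      obtain ⟨t, ht⟩ : ∃ t, p = 2 * t + 1 := ⟨p / 2, by omega⟩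
      obtain ⟨s, hs⟩ := Int.even_mul_succ_self (t : ℤ)
      refine ⟨s, ?_⟩
      have : (p : ℤ) = 2 * t + 1 := by exact_mod_cast congrArg (Nat.cast : ℕ → ℤ) ht
      rw [this]
      norm_num
      linarith [hs]
    · have hk1 : 1 ≤ k := by omega
      have ih' := ih hk1
      have hf : (p : ℤ) ^ (2 ^ (k + 1)) - 1 =
          ((p : ℤ) ^ (2 ^ k) - 1) * ((p : ℤ) ^ (2 ^ k) + 1) := by
        rw [pow_succ, pow_mul]; ring
      have hodd : Odd ((p : ℤ) ^ (2 ^ k)) := by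
        have : Odd (p : ℤ) := by
          refine ⟨(p / 2 : ℕ), ?_⟩
          push_cast
          omega
        exact this.pow
      have h2 : (2 : ℤ) ∣ (p : ℤ) ^ (2 ^ k) + 1 := by
        obtain ⟨c, hc⟩ := hodd
        exact ⟨c + 1, by omega⟩
      rw [hf, show k + 1 + 2 = (k + 2) + 1 from rfl, pow_succ]
      exact mul_dvd_mul ih' h2

lemma nat_two_pow_dvd (p : ℕ) (hp : p % 2 = 1) (k : ℕ) (hk : 1 ≤ k) :
    2 ^ (k + 2) ∣ p ^ 2 ^ k - 1 := by
  have h1 : 1 ≤ p ^ 2 ^ k := Nat.one_le_pow _ _ (by omega)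
  have := int_two_pow_dvd p hp k hk
  have hcast : ((p ^ 2 ^ k - 1 : ℕ) : ℤ) = (p : ℤ) ^ 2 ^ k - 1 := by
    push_cast [h1]; ring
  rw [← hcast] at this
  exact_mod_cast this

/-- There is a unit of any order `t` dividing `p^d - 1` in the `m × m` matrices over `ZMod p`,
provided `d ≤ m`. -/
lemma exists_unit_matrix (p d m : ℕ) [hp : Fact p.Prime] (hd : d ≠ 0) (hdm : d ≤ m) (t : ℕ)
    (ht : t ∣ p ^ d - 1) (ht0 : 0 < t) :
    ∃ U : (Matrix (Fin m) (Fin m) (ZMod p))ˣ, orderOf U = t := by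
  classical
  set F := GaloisField p d with hF
  obtain ⟨g, hg⟩ := IsCyclic.exists_ofOrder_eq_natCard (α := Fˣ)
  have hcard : Nat.card Fˣ = p ^ d - 1 := by
    rw [Nat.card_units, GaloisField.card p d hd]
  set N := p ^ d - 1 with hN
  have hN0 : 0 < N := by
    have : 2 ≤ p := hp.out.two_le
    have : 2 ≤ p ^ d := by
      calc 2 ≤ p := this
      _ ≤ p ^ d := Nat.le_self_pow hd p
    omega
  have hgo : orderOf g = N := by rw [hg, hcard]
  set u := g ^ (N / t) with hu_def
  have hu : orderOf u = t := by
    rw [hu_def, orderOf_pow, hgo, Nat.gcd_eq_right (Nat.div_dvd_of_dvd ht),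
      Nat.div_div_self ht hN0.ne']
  -- now embed F into matrices
  set dd := Module.finrank (ZMod p) F with hdd_def
  have hdd : dd = d := GaloisField.finrank p hd
  let b : Module.Basis (Fin dd) (ZMod p) F := Module.finBasis _ _
  let f1 : F →* Matrix (Fin dd) (Fin dd) (ZMod p) :=
    (Algebra.leftMulMatrix b).toRingHom.toMonoidHom
  have hf1 : Function.Injective f1 := Algebra.leftMulMatrix_injective b
  let f2 := blockMulHom (ZMod p) (Fin dd) (Fin (m - dd))
  have hf2 : Function.Injective f2 := blockMulHom_injective _ _ _
  have hmm : dd + (m - dd) = m := by omega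
  let e : (Fin dd ⊕ Fin (m - dd)) ≃ Fin m := finSumFinEquiv.trans (finCongr hmm)
  let f3 : Matrix (Fin dd ⊕ Fin (m - dd)) (Fin dd ⊕ Fin (m - dd)) (ZMod p) →*
      Matrix (Fin m) (Fin m) (ZMod p) :=
    (Matrix.reindexAlgEquiv (ZMod p) (ZMod p) e).toRingEquiv.toMonoidHom
  have hf3 : Function.Injective f3 :=
    (Matrix.reindexAlgEquiv (ZMod p) (ZMod p) e).injective
  let hom : F →* Matrix (Fin m) (Fin m) (ZMod p) := f3.comp (f2.comp f1)
  have hinj : Function.Injective hom := hf3.comp (hf2.comp hf1)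
  refine ⟨Units.map hom u, ?_⟩
  rw [orderOf_injective (Units.map hom) (Units.map_injective hinj) u]
  exact hu

theorem stmt12 (m : ℕ) (hm : 2 ≤ m) (n : ℕ) (h : IsMCarmichael m n) :
    n % 4 ≠ 2 := by
  intro hn4
  obtain ⟨hnp, hn2, hA⟩ := h
  haveI : NeZero n := ⟨by omega⟩
  have hn6 : 6 ≤ n := by
    rcases Nat.lt_or_ge n 6 with h6 | h6
    · interval_cases n
      · exact (hnp Nat.prime_two).elim
      all_goals omega
    · exact h6
  have hn0 : n ≠ 0 := by omega
  set e := Nat.clog 2 m with he_def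
  have he1 : 1 ≤ e := Nat.clog_pos one_lt_two hm
  -- odd prime p dividing n
  have hhalf : (n / 2) % 2 = 1 := by omega
  have hhalf1 : 1 < n / 2 := by omega
  set p := (n / 2).minFac with hp_def
  have hp : p.Prime := Nat.minFac_prime (by omega)
  haveI := Fact.mk hp
  have hphalf : p ∣ n / 2 := Nat.minFac_dvd _
  have hpn : p ∣ n := hphalf.trans ⟨2, by omega⟩
  have hpodd : p % 2 = 1 := by
    by_contra hc
    have h2p : 2 ∣ p := by omega
    have hp2 : p = 2 := ((Nat.prime_dvd_prime_iff_eq Nat.prime_two hp).mp h2p).symm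
    obtain ⟨c, hc2⟩ := hphalf
    rw [hp2] at hc2
    omega
  -- parameters
  set k := (e - 2) + 1 with hk_def
  set d := 2 ^ k with hd_def
  have hd0 : d ≠ 0 := by positivity
  have hdm : d ≤ m := by
    rcases le_or_gt e 2 with h2 | h2
    · have hk1 : k = 1 := by omega
      rw [hd_def, hk1, pow_one]; exact hm
    · have hlt : 2 ^ (Nat.clog 2 m - 1) < m :=
        Nat.pow_pred_clog_lt_self one_lt_two (by omega)
      rw [← he_def] at hlt
      have hk1 : k = e - 1 := by omega
      rw [hd_def, hk1]
      exact hlt.le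
  have htdvd : 2 ^ (e + 1) ∣ p ^ d - 1 :=
    dvd_trans (pow_dvd_pow 2 (by omega)) (nat_two_pow_dvd p hpodd k (by omega))
  obtain ⟨U, hU⟩ := exists_unit_matrix p d m hd0 hdm (2 ^ (e + 1)) htdvd (by positivity)
  -- lift U to a unit over ZMod n
  classical
  set B : Matrix (Fin m) (Fin m) (ZMod p) := (U : Matrix (Fin m) (Fin m) (ZMod p)) with hB_def
  set n2 := ordCompl[p] n with hn2_def
  have hco : Nat.Coprime p n2 := Nat.coprime_ordCompl hp hn0
  have hsplit : p ^ n.factorization p * n2 = n := Nat.ordProj_mul_ordCompl_eq_self n p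
  set A0 : Matrix (Fin m) (Fin m) (ZMod n) := Matrix.of (fun i j =>
    ((Nat.chineseRemainder hco ((B i j).val) (if i = j then 1 else 0) : ℕ) : ZMod n))
    with hA0_def
  have hred_p : ∀ i j, ZMod.castHom hpn (ZMod p) (A0 i j) = B i j := by
    intro i j
    have hz := (Nat.chineseRemainder hco ((B i j).val) (if i = j then 1 else 0)).2.1
    show ZMod.castHom hpn (ZMod p)
        ((Nat.chineseRemainder hco ((B i j).val) (if i = j then 1 else 0) : ℕ) : ZMod n) = B i j
    rw [map_natCast, (ZMod.natCast_eq_natCast_iff _ _ _).mpr hz]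
    exact ZMod.natCast_rightInverse (B i j)
  have hred_q : ∀ q (hqn : q ∣ n), q ∣ n2 → ∀ i j,
      ZMod.castHom hqn (ZMod q) (A0 i j) = if i = j then 1 else 0 := by
    intro q hqn hq2 i j
    have hz := ((Nat.chineseRemainder hco ((B i j).val) (if i = j then 1 else 0)).2.2).of_dvd hq2
    show ZMod.castHom hqn (ZMod q)
        ((Nat.chineseRemainder hco ((B i j).val) (if i = j then 1 else 0) : ℕ) : ZMod n)
        = if i = j then 1 else 0
    rw [map_natCast, (ZMod.natCast_eq_natCast_iff _ _ _).mpr hz]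
    split <;> simp
  have hdet : IsUnit A0.det := by
    have hval : A0.det = ((A0.det).val : ZMod n) := (ZMod.natCast_rightInverse _).symm
    rw [hval, ZMod.isUnit_iff_coprime]
    apply Nat.coprime_of_dvd
    intro q hq hq1 hq2
    haveI := Fact.mk hq
    haveI : NeZero q := ⟨hq.pos.ne'⟩
    have h0 : ZMod.castHom hq2 (ZMod q) A0.det = 0 := by
      conv_lhs => rw [hval]
      rw [map_natCast, ZMod.natCast_eq_zero_iff]
      exact hq1
    rw [RingHom.map_det] at h0
    by_cases hqp : q = p
    · subst hqp
      have hBmat : (ZMod.castHom hq2 (ZMod p)).mapMatrix A0 = B := by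
        ext i j
        simpa [RingHom.mapMatrix_apply, Matrix.map_apply] using hred_p i j
      rw [hBmat] at h0
      have hIU : IsUnit B.det := (Matrix.isUnit_iff_isUnit_det _).mp U.isUnit
      rw [h0] at hIU
      exact absurd rfl hIU.ne_zero
    · have hq2' : q ∣ n2 := by
        have hcop : Nat.Coprime q (p ^ n.factorization p) :=
          Nat.Coprime.pow_right _ ((Nat.coprime_primes hq hp).mpr hqp)
        refine hcop.dvd_of_dvd_mul_left ?_
        rw [hsplit]; exact hq2
      have hImat : (ZMod.castHom hq2 (ZMod q)).mapMatrix A0 = 1 := by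
        ext i j
        rw [RingHom.mapMatrix_apply, Matrix.map_apply, hred_q q hq2 hq2' i j, Matrix.one_apply]
      rw [hImat, Matrix.det_one] at h0
      exact absurd h0 one_ne_zero
  obtain ⟨A, hAval⟩ := (Matrix.isUnit_iff_isUnit_det _).mpr hdet
  have hpow : A ^ Km m n = 1 := hA A
  let ρ : (Matrix (Fin m) (Fin m) (ZMod n))ˣ →* (Matrix (Fin m) (Fin m) (ZMod p))ˣ :=
    Units.map ((ZMod.castHom hpn (ZMod p)).mapMatrix.toMonoidHom)
  have hρA : ρ A = U := by
    refine Units.ext ?_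
    have hval : (ρ A : Matrix (Fin m) (Fin m) (ZMod p)) =
        (ZMod.castHom hpn (ZMod p)).mapMatrix (A : Matrix (Fin m) (Fin m) (ZMod n)) := rfl
    rw [hval, hAval]
    ext i j
    rw [RingHom.mapMatrix_apply, Matrix.map_apply]
    exact hred_p i j
  have hUpow : U ^ Km m n = 1 := by
    rw [← hρA, ← map_pow, hpow, _root_.map_one]
  have hdvdK : 2 ^ (e + 1) ∣ Km m n := hU ▸ orderOf_dvd_of_pow_eq_one hUpow
  -- the 2-adic valuation of Km m n is exactly e, contradiction
  obtain ⟨a, haodd, hna⟩ : ∃ a, Odd a ∧ n = 2 * a :=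
    ⟨n / 2, Nat.odd_iff.mpr hhalf, by omega⟩
  have h2mem : 2 ∈ n.primeFactors :=
    Nat.mem_primeFactors.mpr ⟨Nat.prime_two, ⟨a, hna⟩, hn0⟩
  set bb := ∏ q ∈ n.primeFactors.erase 2, q ^ (Nat.clog q m - 1) with hbb
  have hnab : nablam m n = 2 ^ (e - 1) * bb := (Finset.mul_prod_erase _ _ h2mem).symm
  have hbbodd : Odd bb := by
    refine Finset.prod_induction _ Odd (fun x y => Odd.mul) odd_one ?_
    intro q hq
    have hq2 : q ≠ 2 := (Finset.mem_erase.mp hq).1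
    have hqpr : q.Prime := Nat.prime_of_mem_primeFactors (Finset.mem_erase.mp hq).2
    exact (hqpr.odd_of_ne_two hq2).pow
  -- Dm m n is odd and positive
  set P := ∏ j ∈ Finset.Icc 1 m, (Polynomial.cyclotomic j ℤ).eval (n : ℤ) with hP
  have hfodd : ∀ j ∈ Finset.Icc 1 m, ¬ (2:ℤ) ∣ (Polynomial.cyclotomic j ℤ).eval (n : ℤ) := by
    intro j hj hdvd2
    have hj1 : 1 ≤ j := (Finset.mem_Icc.mp hj).1
    have hdp : (Polynomial.cyclotomic j ℤ).eval (n : ℤ) ∣ (n : ℤ) ^ j - 1 := by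
      have := Polynomial.eval_dvd (x := (n : ℤ))
        (Polynomial.cyclotomic.dvd_X_pow_sub_one j ℤ)
      simpa using this
    have h2x : (2:ℤ) ∣ (n : ℤ) ^ j := by
      refine dvd_pow ?_ (by omega)
      exact_mod_cast (⟨a, hna⟩ : (2:ℕ) ∣ n)
    have h21 : (2:ℤ) ∣ (n : ℤ) ^ j - 1 := hdvd2.trans hdp
    set x := (n:ℤ)^j
    omega
  have hPodd : ¬ (2:ℤ) ∣ P := by
    intro hP2
    obtain ⟨j, hj, hj2⟩ := (Int.prime_two.dvd_finset_prod_iff _).mp hP2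
    exact hfodd j hj hj2
  have hPpos : 0 < P := by
    refine Finset.prod_pos ?_
    intro j hj
    exact Polynomial.cyclotomic_pos' j (by exact_mod_cast (by omega : 1 < n))
  have hDmP : Dm m n = P.toNat := by rw [hP]; rfl
  have hDodd : Odd (Dm m n) := by
    rw [Nat.odd_iff]
    have h1 : (P.toNat : ℤ) = P := Int.toNat_of_nonneg hPpos.le
    rcases Nat.even_or_odd P.toNat with he2 | ho
    · exfalso
      obtain ⟨c, hc⟩ := he2
      apply hPodd
      rw [← h1, hc]
      push_cast
      exact ⟨c, by ring⟩
    · rw [hDmP]; exact Nat.odd_iff.mp ho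
  set w := a * bb * Dm m n with hw
  have hwodd : Odd w := (haodd.mul hbbodd).mul hDodd
  have hKm : Km m n = 2 ^ e * w := by
    show n * nablam m n * Dm m n = 2 ^ e * w
    rw [hnab, hw]
    have h2e : 2 * 2 ^ (e - 1) = 2 ^ e := by
      conv_rhs => rw [show e = (e-1)+1 by omega]
      rw [pow_succ]; ring
    calc n * (2 ^ (e - 1) * bb) * Dm m n
        = (2 * 2 ^ (e - 1)) * (a * bb * Dm m n) := by rw [hna]; ring
      _ = 2 ^ e * (a * bb * Dm m n) := by rw [h2e]
  have h2w : 2 ∣ w := by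
    have hK2 := hdvdK
    rw [hKm, pow_succ] at hK2
    exact (Nat.mul_dvd_mul_iff_left (by positivity : 0 < 2 ^ e)).mp hK2
  rw [Nat.odd_iff] at hwodd
  omega
end

section
/- For every odd prime p and every m ≥ 2, the 2-adic valuation of D_m(p) = ∏_{j=1}^m Φ_j(p) is at least ⌊log_2 m⌋ + 2. -/
open Finset Matrix

section Aux
open Polynomial

lemma eval_cyc_two_pow (p : ℕ) (k : ℕ) :
    (cyclotomic (2 ^ (k + 1)) ℤ).eval (p : ℤ) = (p : ℤ) ^ 2 ^ k + 1 := by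
  rw [cyclotomic_prime_pow_eq_geom_sum Nat.prime_two]
  simp [Finset.sum_range_succ, add_comm]

lemma key (p : ℕ) (hp : p.Prime) (hodd : p ≠ 2) (m : ℕ) (hm : 2 ≤ m) :
    (2 : ℤ) ^ (Nat.log 2 m + 2) ∣ ∏ j ∈ Finset.Icc 1 m, (cyclotomic j ℤ).eval (p : ℤ) := by
  set L := Nat.log 2 m with hL
  have hL1 : 1 ≤ L := Nat.le_log_of_pow_le one_lt_two (by simpa using hm)
  have hodd' : Odd (p : ℤ) := by
    have := hp.odd_of_ne_two hodd
    exact_mod_cast this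
  obtain ⟨t, ht⟩ := hodd'
  -- subsets
  set S : Finset ℕ := insert 1 (insert 2 ((Finset.Icc 2 L).image (2 ^ ·))) with hS
  have hsub : S ⊆ Finset.Icc 1 m := by
    intro x hx
    simp only [hS, Finset.mem_insert, Finset.mem_image, Finset.mem_Icc] at hx
    rcases hx with rfl | rfl | ⟨k, ⟨hk2, hkL⟩, rfl⟩
    · simp [Finset.mem_Icc]; omega
    · simp [Finset.mem_Icc]; omega
    · simp only [Finset.mem_Icc]
      constructor
      · exact Nat.one_le_two_pow
      · calc 2 ^ k ≤ 2 ^ L := Nat.pow_le_pow_right (by norm_num) hkL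
          _ ≤ m := Nat.pow_log_le_self 2 (by omega)
  have h1 : (1 : ℕ) ∉ insert 2 ((Finset.Icc 2 L).image (2 ^ ·)) := by
    simp only [Finset.mem_insert, Finset.mem_image, Finset.mem_Icc]
    push_neg
    refine ⟨by norm_num, fun k hk => ?_⟩
    have : 2 ^ 2 ≤ 2 ^ k := Nat.pow_le_pow_right (by norm_num) hk.1
    omega
  have h2 : (2 : ℕ) ∉ (Finset.Icc 2 L).image (2 ^ ·) := by
    simp only [Finset.mem_image, Finset.mem_Icc]
    push_neg
    intro k hk
    have : 2 ^ 2 ≤ 2 ^ k := Nat.pow_le_pow_right (by norm_num) hk.1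
    omega
  have hinj : Set.InjOn (2 ^ ·) (Finset.Icc 2 L) :=
    fun a _ b _ h => Nat.pow_right_injective (le_refl 2) h
  have hprodS : ∏ j ∈ S, (cyclotomic j ℤ).eval (p : ℤ)
      = ((p : ℤ) - 1) * (((p : ℤ) + 1) * ∏ k ∈ Finset.Icc 2 L, ((p : ℤ) ^ 2 ^ (k - 1) + 1)) := by
    rw [hS, Finset.prod_insert h1, Finset.prod_insert h2, Finset.prod_image hinj]
    rw [cyclotomic_one, cyclotomic_two]
    simp only [eval_sub, eval_add, eval_X, eval_one]
    congr 1
    congr 1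
    apply Finset.prod_congr rfl
    intro k hk
    simp only [Finset.mem_Icc] at hk
    have : k = (k - 1) + 1 := by omega
    rw [this, eval_cyc_two_pow]
    simp
  have hdvd8 : (2 : ℤ) ^ 3 ∣ ((p : ℤ) - 1) * ((p : ℤ) + 1) := by
    have h2t : (2 : ℤ) ∣ t * (t + 1) := (Int.even_mul_succ_self t).two_dvd
    obtain ⟨s, hs⟩ := h2t
    refine ⟨s, ?_⟩
    rw [ht]
    ring_nf
    ring_nf at hs
    linarith
  have hdvdrest : (2 : ℤ) ^ (L - 1) ∣ ∏ k ∈ Finset.Icc 2 L, ((p : ℤ) ^ 2 ^ (k - 1) + 1) := by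
    have : ∏ k ∈ Finset.Icc 2 L, (2 : ℤ) ∣ ∏ k ∈ Finset.Icc 2 L, ((p : ℤ) ^ 2 ^ (k - 1) + 1) := by
      apply Finset.prod_dvd_prod_of_dvd
      intro k _
      have hop : Odd ((p : ℤ)) := ⟨t, ht⟩
      have : Odd ((p : ℤ) ^ 2 ^ (k - 1)) := hop.pow
      obtain ⟨u, hu⟩ := this
      exact ⟨u + 1, by omega⟩
    simpa [Finset.prod_const, Nat.card_Icc] using this
  have hSdvd : (2 : ℤ) ^ (L + 2) ∣ ∏ j ∈ S, (cyclotomic j ℤ).eval (p : ℤ) := by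
    rw [hprodS, ← mul_assoc]
    have : (2 : ℤ) ^ (L + 2) = 2 ^ 3 * 2 ^ (L - 1) := by
      rw [← pow_add]; congr 1; omega
    rw [this]
    exact mul_dvd_mul hdvd8 hdvdrest
  exact hSdvd.trans (Finset.prod_dvd_prod_of_subset _ _ _ hsub)

theorem stmt13 (p : ℕ) (hp : p.Prime) (hodd : p ≠ 2) (m : ℕ) (hm : 2 ≤ m) :
    Nat.log 2 m + 2 ≤ (Dm m p).factorization 2 := by
  have hp1 : (1 : ℤ) < (p : ℤ) := by exact_mod_cast hp.one_lt
  have hpos : 0 < ∏ j ∈ Finset.Icc 1 m, (cyclotomic j ℤ).eval (p : ℤ) :=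
    Finset.prod_pos fun j _ => cyclotomic_pos' j hp1
  have hDm : (Dm m p : ℤ) = ∏ j ∈ Finset.Icc 1 m, (cyclotomic j ℤ).eval (p : ℤ) := by
    rw [Dm, Int.toNat_of_nonneg hpos.le]
  have hdvd : 2 ^ (Nat.log 2 m + 2) ∣ Dm m p := by
    have := key p hp hodd m hm
    rw [← hDm] at this
    exact_mod_cast this
  have hne : Dm m p ≠ 0 := by
    intro h
    rw [h] at hDm
    exact hpos.ne' (by exact_mod_cast hDm.symm)
  exact (Nat.Prime.pow_dvd_iff_le_factorization Nat.prime_two hne).mp hdvd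

end Aux
end

section
/- If n ≡ 2 (mod 4) and m ≥ 2, then the 2-adic valuation of K_m(n) = n·∇_m(n)·D_m(n) equals ⌈log_2 m⌉. -/
open Finset Matrix

lemma cyc_eval_odd (n : ℕ) (hn : 2 ∣ n) (j : ℕ) (hj : 1 ≤ j) :
    ¬ (2 : ℤ) ∣ (Polynomial.cyclotomic j ℤ).eval (n : ℤ) := by
  have hcast : (Int.castRingHom (ZMod 2)) ((Polynomial.cyclotomic j ℤ).eval (n : ℤ)) =
      (Polynomial.cyclotomic j (ZMod 2)).eval ((Int.castRingHom (ZMod 2)) (n : ℤ)) := by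
    rw [← Polynomial.map_cyclotomic j (Int.castRingHom (ZMod 2)), Polynomial.eval_map,
      Polynomial.eval₂_hom]
  have hn0 : (Int.castRingHom (ZMod 2)) (n : ℤ) = 0 := by
    have : (Int.castRingHom (ZMod 2)) (n : ℤ) = (n : ZMod 2) := by simp
    rw [this, (ZMod.natCast_eq_zero_iff n 2).mpr hn]
  intro hdvd
  have h2 : (Int.castRingHom (ZMod 2)) ((Polynomial.cyclotomic j ℤ).eval (n : ℤ)) = 0 := by
    obtain ⟨k, hk⟩ := hdvd
    rw [hk, _root_.map_mul]
    have : (Int.castRingHom (ZMod 2)) 2 = 0 := by decide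
    rw [this, zero_mul]
  rw [hcast, hn0, ← Polynomial.coeff_zero_eq_eval_zero] at h2
  rcases eq_or_lt_of_le hj with h1 | h1
  · rw [← h1, Polynomial.cyclotomic_one] at h2
    simp at h2
  · rw [Polynomial.cyclotomic_coeff_zero (ZMod 2) h1] at h2
    exact one_ne_zero h2

theorem stmt14 (n : ℕ) (hn : n % 4 = 2) (m : ℕ) (hm : 2 ≤ m) :
    (Km m n).factorization 2 = Nat.clog 2 m := by
  have h2n : 2 ∣ n := by omega
  have hn2 : 2 ≤ n := by omega
  have hn0 : n ≠ 0 := by omega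
  -- Dm is positive and odd
  have hprodpos : 0 < ∏ j ∈ Finset.Icc 1 m, (Polynomial.cyclotomic j ℤ).eval (n : ℤ) := by
    apply Finset.prod_pos
    intro j hj
    exact Polynomial.cyclotomic_pos' j (by exact_mod_cast hn2)
  have hDpos : 0 < Dm m n := by
    unfold Dm
    have := Int.toNat_of_nonneg hprodpos.le
    omega
  have hDodd : ¬ 2 ∣ Dm m n := by
    intro hd
    have : (2 : ℤ) ∣ ∏ j ∈ Finset.Icc 1 m, (Polynomial.cyclotomic j ℤ).eval (n : ℤ) := by
      have := Int.toNat_of_nonneg hprodpos.le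
      rw [← this]
      exact_mod_cast Int.natCast_dvd_natCast.mpr hd
    obtain ⟨j, hj, hjd⟩ := Prime.exists_mem_finset_dvd Int.prime_two this
    exact cyc_eval_odd n h2n j (Finset.mem_Icc.mp hj).1 hjd
  have hNpos : nablam m n ≠ 0 := by
    unfold nablam
    exact Finset.prod_ne_zero_iff.mpr fun p hp => pow_ne_zero _ (Nat.Prime.pos (Nat.prime_of_mem_primeFactors hp)).ne'
  -- factorization of n at 2 is 1
  have hfn : n.factorization 2 = 1 := by
    have h1 : 2 ^ 1 ∣ n := by simpa using h2n
    have h2 : ¬ 2 ^ 2 ∣ n := by omega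
    rw [Nat.Prime.pow_dvd_iff_le_factorization Nat.prime_two hn0] at h1 h2
    omega
  -- factorization of nablam at 2
  have hfN : (nablam m n).factorization 2 = Nat.clog 2 m - 1 := by
    unfold nablam
    rw [Nat.factorization_prod (g := fun p => p ^ (Nat.clog p m - 1))
      (fun p hp => pow_ne_zero _ (Nat.Prime.pos (Nat.prime_of_mem_primeFactors hp)).ne')]
    rw [Finset.sum_apply']
    rw [Finset.sum_eq_single 2]
    · rw [Nat.factorization_pow, Nat.Prime.factorization Nat.prime_two]
      simp
    · intro p hp hp2
      rw [Nat.factorization_pow, (Nat.prime_of_mem_primeFactors hp).factorization]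
      simp [hp2]
    · intro h
      exact absurd (Nat.mem_primeFactors.mpr ⟨Nat.prime_two, h2n, hn0⟩) h
  have hfD : (Dm m n).factorization 2 = 0 := Nat.factorization_eq_zero_of_not_dvd hDodd
  have hclog : 1 ≤ Nat.clog 2 m := Nat.clog_pos one_lt_two hm
  unfold Km
  rw [Nat.factorization_mul (by positivity) hDpos.ne', Nat.factorization_mul hn0 hNpos]
  simp only [Finsupp.coe_add, Pi.add_apply, hfn, hfN, hfD]
  omega
end

section
/- Let p be a prime dividing n, k ≥ 1, m ≥ k. Then GL(m, ℤ/nℤ) contains an element of order p^k - 1. -/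
open Matrix Finset

section Aux

/-- The index equivalence used for the block-diagonal embedding. -/
def blkEquiv' (k m : ℕ) (hkm : k ≤ m) : Fin k ⊕ Fin (m - k) ≃ Fin m :=
  finSumFinEquiv.trans (finCongr (by omega))

/-- Block-diagonal embedding of matrix monoids, extending by the identity. -/
def blockEmb' (k m : ℕ) (hkm : k ≤ m) (R : Type*) [CommRing R] :
    Matrix (Fin k) (Fin k) R →* Matrix (Fin m) (Fin m) R where
  toFun X := (Matrix.fromBlocks X 0 0 (1 : Matrix (Fin (m - k)) (Fin (m - k)) R)).submatrix
    (blkEquiv' k m hkm).symm (blkEquiv' k m hkm).symm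
  map_one' := by
    show (Matrix.fromBlocks (1 : Matrix (Fin k) (Fin k) R) 0 0 1).submatrix _ _ = 1
    rw [Matrix.fromBlocks_one]
    exact Matrix.submatrix_one_equiv _
  map_mul' X Y := by
    show _ = ((Matrix.fromBlocks X 0 0 1).submatrix (blkEquiv' k m hkm).symm
        (blkEquiv' k m hkm).symm) *
      ((Matrix.fromBlocks Y 0 0 1).submatrix (blkEquiv' k m hkm).symm (blkEquiv' k m hkm).symm)
    rw [Matrix.submatrix_mul_equiv _ _ _ ((blkEquiv' k m hkm).symm) _,
      Matrix.fromBlocks_multiply]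
    simp

theorem blockEmb'_injective (k m : ℕ) (hkm : k ≤ m) (R : Type*) [CommRing R] :
    Function.Injective (blockEmb' k m hkm R) := by
  intro X Y h
  have h2 := congrArg (fun M : Matrix (Fin m) (Fin m) R => Matrix.toBlocks₁₁ (M.submatrix
    (blkEquiv' k m hkm) (blkEquiv' k m hkm))) h
  simpa [blockEmb', Matrix.submatrix_submatrix, Equiv.symm_comp_self] using h2

/-- Entrywise pairing of a matrix with the identity matrix, as a multiplicative
monoid hom into matrices over a product ring. -/
def pairEmb' (m : ℕ) (R S : Type*) [CommRing R] [CommRing S] :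
    Matrix (Fin m) (Fin m) R →* Matrix (Fin m) (Fin m) (R × S) where
  toFun X := fun i j => (X i j, (1 : Matrix (Fin m) (Fin m) S) i j)
  map_one' := by
    ext i j
    · simp [Matrix.one_apply]; split <;> rfl
    · simp [Matrix.one_apply]; split <;> rfl
  map_mul' X Y := by
    ext i j
    · simp [Matrix.mul_apply, Prod.fst_sum]
      show _ = (∑ l, (X i l, (1 : Matrix (Fin m) (Fin m) S) i l) * (Y l j, (1 : Matrix (Fin m) (Fin m) S) l j)).1
      simp [Prod.fst_sum]
    · show (1 : Matrix (Fin m) (Fin m) S) i j = _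
      conv_lhs => rw [← mul_one (1 : Matrix (Fin m) (Fin m) S)]
      simp [Matrix.mul_apply, Prod.snd_sum]
      show _ = (∑ l, (X i l, (1 : Matrix (Fin m) (Fin m) S) i l) * (Y l j, (1 : Matrix (Fin m) (Fin m) S) l j)).2
      simp [Prod.snd_sum]

theorem pairEmb'_injective (m : ℕ) (R S : Type*) [CommRing R] [CommRing S] :
    Function.Injective (pairEmb' m R S) := by
  intro X Y h
  ext i j
  exact congrArg Prod.fst (congrFun (congrFun h i) j)

theorem natW' (p : ℕ) (hp : p.Prime) (s i : ℕ) (hs : 1 ≤ s) (hi : i < p) :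
    p ^ (s + 1) ∣ p ^ (s * (i + 1)) * p.choose (i + 1) := by
  rcases Nat.lt_or_ge (i + 1) p with h | h
  · have hd : p ∣ p.choose (i + 1) := hp.dvd_choose_self (by omega) h
    obtain ⟨c, hc⟩ := hd
    rw [hc, ← mul_assoc]
    have h2 : p ^ (s + 1) ∣ p ^ (s * (i + 1)) * p := by
      rw [← pow_succ]
      exact pow_dvd_pow p (by nlinarith)
    exact h2.mul_right c
  · have hip : i + 1 = p := by omega
    apply Dvd.dvd.mul_right
    apply pow_dvd_pow
    have := hp.two_le
    nlinarith

theorem stepU' {m : ℕ} {R : Type*} [CommRing R] (p : ℕ) (hp : p.Prime) (s : ℕ) (hs : 1 ≤ s)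
    (E : Matrix (Fin m) (Fin m) R) :
    ∃ E', (1 + (p : R) ^ s • E) ^ p = 1 + (p : R) ^ (s + 1) • E' := by
  set D := (p : R) ^ s • E with hD
  have hc : Commute D (1 : Matrix (Fin m) (Fin m) R) := Commute.one_right D
  have expand := hc.add_pow p
  rw [add_comm D 1] at expand
  refine ⟨∑ i ∈ range p, ((p ^ (s * (i + 1)) * p.choose (i + 1)) / p ^ (s + 1) : ℕ) • E ^ (i + 1),
    ?_⟩
  rw [expand, Finset.sum_range_succ']
  simp only [pow_zero, one_mul, Nat.choose_zero_right, Nat.cast_one, mul_one, one_pow]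
  rw [add_comm]
  congr 1
  rw [Finset.smul_sum]
  refine Finset.sum_congr rfl fun i hi => ?_
  have hdvd := natW' p hp s i hs (Finset.mem_range.mp hi)
  have hcastC : (p.choose (i + 1) : Matrix (Fin m) (Fin m) R)
      = (p.choose (i + 1) : ℕ) • (1 : Matrix (Fin m) (Fin m) R) := by
    simp [nsmul_eq_mul]
  calc D ^ (i + 1) * (p.choose (i + 1) : Matrix (Fin m) (Fin m) R)
      = (p : R) ^ (s * (i + 1)) • ((p.choose (i + 1) : ℕ) • E ^ (i + 1)) := by
        rw [hD, smul_pow, ← pow_mul, hcastC, mul_smul_comm, mul_one, smul_comm]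
    _ = (p : R) ^ (s + 1) •
          (((p ^ (s * (i + 1)) * p.choose (i + 1)) / p ^ (s + 1) : ℕ) • E ^ (i + 1)) := by
        rw [← Nat.cast_smul_eq_nsmul R, ← Nat.cast_smul_eq_nsmul R, smul_smul, smul_smul,
          ← Nat.cast_pow, ← Nat.cast_mul, ← Nat.cast_pow, ← Nat.cast_mul,
          Nat.mul_div_cancel' hdvd]

theorem unipV' {m : ℕ} {R : Type*} [CommRing R] (p : ℕ) (hp : p.Prime)
    (E : Matrix (Fin m) (Fin m) R) (j : ℕ) :
    ∃ E', (1 + (p : R) • E) ^ (p ^ j) = 1 + (p : R) ^ (j + 1) • E' := by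
  induction j with
  | zero => exact ⟨E, by simp⟩
  | succ j ih =>
    obtain ⟨E', hE'⟩ := ih
    obtain ⟨E'', hE''⟩ := stepU' p hp (j + 1) (by omega) E'
    exact ⟨E'', by rw [pow_succ, pow_mul, hE', hE'']⟩

/-- Lifting an element of order `p^k - 1` from `GL(m, ZMod p)` to `GL(m, ZMod (p^e))`. -/
theorem primePowLift' (p e : ℕ) (hp : p.Prime) (he : 1 ≤ e) (m k : ℕ) (hk : 1 ≤ k)
    (A : GL (Fin m) (ZMod p)) (hA : orderOf A = p ^ k - 1) :
    ∃ B : GL (Fin m) (ZMod (p ^ e)), orderOf B = p ^ k - 1 := by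
  haveI := Fact.mk hp
  haveI : NeZero (p ^ e) := ⟨pow_ne_zero _ hp.ne_zero⟩
  set R := ZMod (p ^ e) with hR
  let q : R →+* ZMod p := ZMod.castHom (dvd_pow_self p (by omega)) (ZMod p)
  set d := p ^ k - 1 with hd
  have hd1 : 1 ≤ d := by
    have : 1 < p ^ k := Nat.one_lt_pow (by omega) hp.two_le
    omega
  set Xb : Matrix (Fin m) (Fin m) R :=
    fun i j => (((A : Matrix (Fin m) (Fin m) (ZMod p)) i j).val : R) with hXb
  have hq : q.mapMatrix Xb = (A : Matrix (Fin m) (Fin m) (ZMod p)) := by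
    ext i j
    simp only [RingHom.mapMatrix_apply, Matrix.map_apply, hXb, map_natCast]
    show q (((A : Matrix (Fin m) (Fin m) (ZMod p)) i j).val : R) = _
    rw [map_natCast]
    exact ZMod.natCast_rightInverse (n := p) _
  have hlift : ∀ x : R, IsUnit (q x) → IsUnit x := by
    intro x hx
    have hxval : ((x.val : ℕ) : R) = x := ZMod.natCast_rightInverse x
    have hqx : q x = ((x.val : ℕ) : ZMod p) := by
      conv_lhs => rw [← hxval]
      exact map_natCast q x.val
    rw [hqx] at hx
    have hcop : Nat.Coprime x.val p := (ZMod.isUnit_iff_coprime _ _).mp hx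
    rw [← hxval]
    exact (ZMod.isUnit_iff_coprime _ _).mpr (hcop.pow_right e)
  have hdet : IsUnit Xb.det := by
    apply hlift
    rw [RingHom.map_det, hq]
    exact (Matrix.isUnit_iff_isUnit_det _).mp A.isUnit
  have hXbU : IsUnit Xb := (Matrix.isUnit_iff_isUnit_det Xb).mpr hdet
  let B : GL (Fin m) R := hXbU.unit
  let π : GL (Fin m) R →* GL (Fin m) (ZMod p) := Units.map (q.mapMatrix.toMonoidHom)
  have hπB : π B = A := by
    apply Units.ext
    show q.mapMatrix (B : Matrix (Fin m) (Fin m) R) = _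
    rw [show (B : Matrix (Fin m) (Fin m) R) = Xb from hXbU.unit_spec, hq]
  set t := k * e with ht
  have het : e ≤ t := Nat.le_mul_of_pos_left e hk
  have hdvd_sub : d ∣ p ^ t - 1 := by
    have h := Nat.sub_dvd_pow_sub_pow (p ^ k) 1 e
    simpa [← pow_mul, ht] using h
  obtain ⟨c, hc⟩ := hdvd_sub
  have hpt1 : 1 ≤ p ^ t := Nat.one_le_pow _ _ hp.pos
  have hptc : p ^ t = d * c + 1 := by omega
  set C := B ^ (p ^ t) with hC
  have hAd : A ^ d = 1 := by rw [← hA]; exact pow_orderOf_eq_one A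
  have hπC : π C = A := by
    rw [hC, map_pow, hπB, hptc, pow_add, pow_mul, hAd, one_pow, one_mul, pow_one]
  have hddvd : d ∣ orderOf C := by
    have h1 : orderOf (π C) ∣ orderOf C := orderOf_map_dvd π C
    rw [hπC, hA] at h1; exact h1
  set X : Matrix (Fin m) (Fin m) R := (B : Matrix (Fin m) (Fin m) R) ^ d with hX
  have hXq : q.mapMatrix X = 1 := by
    rw [hX, map_pow]
    rw [show q.mapMatrix (B : Matrix (Fin m) (Fin m) R) = (A : Matrix (Fin m) (Fin m) (ZMod p))
      from by rw [show (B : Matrix (Fin m) (Fin m) R) = Xb from hXbU.unit_spec, hq]]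
    rw [← Units.val_pow_eq_pow_val, hAd, Units.val_one]
  have hentry : ∀ i j, ∃ y : R, (X - 1) i j = (p : R) * y := by
    intro i j
    have hmap0 : q.mapMatrix (X - 1) = 0 := by rw [map_sub, hXq]; simp
    have h0 : q ((X - 1) i j) = 0 := by
      calc q ((X - 1) i j) = (q.mapMatrix (X - 1)) i j := rfl
        _ = 0 := by rw [hmap0]; rfl
    set x := (X - 1) i j with hx
    have hxval : ((x.val : ℕ) : R) = x := ZMod.natCast_rightInverse x
    have hqx : q x = ((x.val : ℕ) : ZMod p) := by
      conv_lhs => rw [← hxval]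
      exact map_natCast q x.val
    rw [hqx] at h0
    obtain ⟨y, hy⟩ := (ZMod.natCast_eq_zero_iff _ _).mp h0
    refine ⟨(y : R), ?_⟩
    rw [← hxval, hy]
    push_cast
    exact Nat.cast_mul (α := ZMod (p ^ e)) p y
  choose E hE using hentry
  set EM : Matrix (Fin m) (Fin m) R := Matrix.of E with hEM
  have hXE : X = 1 + (p : R) • EM := by
    ext i j
    have h := hE i j
    simp only [Matrix.sub_apply] at h
    have h2 : X i j = (1 : Matrix (Fin m) (Fin m) R) i j + (p : R) * E i j :=
      sub_eq_iff_eq_add'.mp h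
    simpa [hEM, Matrix.add_apply, Matrix.smul_apply] using h2
  obtain ⟨E', hE'⟩ := unipV' p hp EM (e - 1)
  have hpe : ((p : R)) ^ (e - 1 + 1) = 0 := by
    have he1 : e - 1 + 1 = e := by omega
    rw [he1, ← Nat.cast_pow, ZMod.natCast_self]
  have hX1 : X ^ (p ^ (e - 1)) = 1 := by
    rw [hXE, hE', hpe, zero_smul, add_zero]
  have hBd1 : (B ^ d) ^ (p ^ (e - 1)) = 1 := by
    apply Units.ext
    show (((B ^ d) ^ p ^ (e - 1) : GL (Fin m) R) : Matrix (Fin m) (Fin m) R) = 1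
    rw [Units.val_pow_eq_pow_val, Units.val_pow_eq_pow_val]
    exact hX1
  have hCd : C ^ d = 1 := by
    have h1 : C ^ d = (B ^ d) ^ (p ^ t) := by
      rw [hC, ← pow_mul, ← pow_mul, mul_comm]
    have h2 : p ^ t = p ^ (e - 1) * p ^ (t - (e - 1)) := by
      rw [← pow_add]
      congr 1
      omega
    rw [h1, h2, pow_mul, hBd1, one_pow]
  exact ⟨C, Nat.dvd_antisymm (orderOf_dvd_of_pow_eq_one hCd) hddvd⟩

/-- An element of order `p^k - 1` in `GL(m, ZMod p)`. -/
theorem glZModPOrder (p : ℕ) (hp : p.Prime) (k m : ℕ) (hk : 1 ≤ k) (hkm : k ≤ m) :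
    ∃ A : GL (Fin m) (ZMod p), orderOf A = p ^ k - 1 := by
  classical
  haveI := Fact.mk hp
  set F := GaloisField p k with hF
  have hk0 : k ≠ 0 := by omega
  obtain ⟨g, hg⟩ := IsCyclic.exists_generator (α := Fˣ)
  have hgord : orderOf g = p ^ k - 1 := by
    rw [orderOf_eq_card_of_forall_mem_zpowers hg, Nat.card_units, GaloisField.card p k hk0]
  have hfin : Module.finrank (ZMod p) F = k := GaloisField.finrank p hk0
  let b : Module.Basis (Fin k) (ZMod p) F := (Module.finBasis (ZMod p) F).reindex (finCongr hfin)
  let φ : F →ₐ[ZMod p] Matrix (Fin k) (Fin k) (ZMod p) := Algebra.leftMulMatrix b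
  have hφ : Function.Injective φ := Algebra.leftMulMatrix_injective b
  let ψ : Fˣ →* (Matrix (Fin k) (Fin k) (ZMod p))ˣ := Units.map (φ : F →* _)
  have hψ : Function.Injective ψ := Units.map_injective hφ
  let χ : (Matrix (Fin k) (Fin k) (ZMod p))ˣ →* (Matrix (Fin m) (Fin m) (ZMod p))ˣ :=
    Units.map (blockEmb' k m hkm (ZMod p))
  have hχ : Function.Injective χ := Units.map_injective (blockEmb'_injective k m hkm (ZMod p))
  refine ⟨χ (ψ g), ?_⟩
  rw [orderOf_injective χ hχ, orderOf_injective ψ hψ, hgord]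

end Aux

theorem stmt16 (n p : ℕ) (hn : 0 < n) (hp : p.Prime) (hpn : p ∣ n)
    (k m : ℕ) (hk : 1 ≤ k) (hkm : k ≤ m) :
    ∃ A : GL (Fin m) (ZMod n), orderOf A = p ^ k - 1 := by
  classical
  haveI := Fact.mk hp
  set e := n.factorization p with he'
  have he : 1 ≤ e := hp.factorization_pos_of_dvd hn.ne' hpn
  obtain ⟨A₀, hA₀⟩ := glZModPOrder p hp k m hk hkm
  obtain ⟨B, hB⟩ := primePowLift' p e hp he m k hk A₀ hA₀
  -- transfer to ZMod n via CRT
  set n' := n / p ^ e with hn'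
  have hcop : Nat.Coprime (p ^ e) n' := (Nat.coprime_ordCompl hp hn.ne').pow_left e
  have hmul : p ^ e * n' = n := Nat.ordProj_mul_ordCompl_eq_self n p
  let crt : ZMod n ≃+* ZMod (p ^ e) × ZMod n' :=
    (ZMod.ringEquivCongr hmul.symm).trans (ZMod.chineseRemainder hcop)
  let Φ : Matrix (Fin m) (Fin m) (ZMod (p ^ e)) →* Matrix (Fin m) (Fin m) (ZMod n) :=
    ((crt.symm.toRingHom.mapMatrix).toMonoidHom).comp (pairEmb' m (ZMod (p ^ e)) (ZMod n'))
  have hΦ : Function.Injective Φ := by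
    apply Function.Injective.comp (g := crt.symm.toRingHom.mapMatrix)
    · intro X Y h
      apply Matrix.ext
      intro i j
      exact crt.symm.injective (congrArg (fun M : Matrix (Fin m) (Fin m) (ZMod n) => M i j) h)
    · exact pairEmb'_injective m _ _
  let ψ : GL (Fin m) (ZMod (p ^ e)) →* GL (Fin m) (ZMod n) := Units.map Φ
  refine ⟨ψ B, ?_⟩
  rw [orderOf_injective ψ (Units.map_injective hΦ), hB]
end
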